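/- arXiv:1511.01039 — 4 statements merged into one kernel-verified Lean document; each statement's English description precedes it below -/
import Mathlib

section
/- Let K ⊂ ℝᵐ be a convex set and let u : Ω → ℝᵐ be a function on an open connected set Ω ⊂ ℝⁿ each of whose components is harmonic, with u(x) ∈ closure(K) for all x in Ω. If u(x₀) ∈ frontier(K) for some x₀ ∈ Ω, then u(x) ∈ frontier(K) for all x ∈ Ω. -/
noncomputable def laplacian {n : ℕ} (f : (Fin n → ℝ) → ℝ) (x : Fin n → ℝ) : ℝ :=
  ∑ i, fderiv ℝ (fun y => fderiv ℝ f y (Pi.single i 1)) x (Pi.single i 1)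

def HarmonicOn {n : ℕ} (f : (Fin n → ℝ) → ℝ) (Ω : Set (Fin n → ℝ)) : Prop :=
  ContDiffOn ℝ 2 f Ω ∧ ∀ x ∈ Ω, laplacian f x = 0




section Plumb
variable {n : ℕ} {U : Set (Fin n → ℝ)} {f g : (Fin n → ℝ) → ℝ} {x : Fin n → ℝ}

lemma diffAt_of_C2 (hU : IsOpen U) (hf : ContDiffOn ℝ 2 f U) (hx : x ∈ U) :
    DifferentiableAt ℝ f x :=
  (hf.differentiableOn (by norm_num)).differentiableAt (hU.mem_nhds hx)

lemma key1 (hU : IsOpen U) (hf : ContDiffOn ℝ 2 f U) (hx : x ∈ U) (v : Fin n → ℝ) :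
    DifferentiableAt ℝ (fun y => fderiv ℝ f y v) x := by
  have h1 : ContDiffOn ℝ 1 (fderiv ℝ f) U := hf.fderiv_of_isOpen hU (by norm_num)
  have h2 : DifferentiableAt ℝ (fderiv ℝ f) x :=
    (h1.differentiableOn (by norm_num)).differentiableAt (hU.mem_nhds hx)
  exact (ContinuousLinearMap.apply ℝ ℝ v).differentiable.differentiableAt.comp x h2

lemma lap_add (hU : IsOpen U) (hf : ContDiffOn ℝ 2 f U) (hg : ContDiffOn ℝ 2 g U)
    (hx : x ∈ U) :
    laplacian (fun y => f y + g y) x = laplacian f x + laplacian g x := by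
  unfold laplacian
  rw [← Finset.sum_add_distrib]
  refine Finset.sum_congr rfl fun i _ => ?_
  set v := (Pi.single i 1 : Fin n → ℝ)
  have hev : (fun y => fderiv ℝ (fun y => f y + g y) y v)
      =ᶠ[nhds x] (fun y => fderiv ℝ f y v + fderiv ℝ g y v) := by
    filter_upwards [hU.mem_nhds hx] with y hy
    rw [fderiv_fun_add (diffAt_of_C2 hU hf hy) (diffAt_of_C2 hU hg hy)]
    rfl
  rw [hev.fderiv_eq, fderiv_fun_add (key1 hU hf hx v) (key1 hU hg hx v)]
  rfl

lemma lap_const_mul (hU : IsOpen U) (hf : ContDiffOn ℝ 2 f U) (hx : x ∈ U) (a : ℝ) :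
    laplacian (fun y => a * f y) x = a * laplacian f x := by
  unfold laplacian
  rw [Finset.mul_sum]
  refine Finset.sum_congr rfl fun i _ => ?_
  set v := (Pi.single i 1 : Fin n → ℝ)
  have hev : (fun y => fderiv ℝ (fun y => a * f y) y v)
      =ᶠ[nhds x] (fun y => a * fderiv ℝ f y v) := by
    filter_upwards [hU.mem_nhds hx] with y hy
    rw [fderiv_const_mul (diffAt_of_C2 hU hf hy) a]
    rfl
  rw [hev.fderiv_eq, fderiv_const_mul (key1 hU hf hx v) a]
  rfl

lemma lap_const (c : ℝ) : laplacian (fun _ : Fin n → ℝ => c) x = 0 := by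
  simp [laplacian]

end Plumb


section MinLemmas
variable {n : ℕ} {U : Set (Fin n → ℝ)} {f : (Fin n → ℝ) → ℝ} {q : Fin n → ℝ}

lemma slope_nonneg {ψ : ℝ → ℝ} {d : ℝ} (hψ : HasDerivAt ψ d 0) (h0 : ψ 0 = 0)
    (hnn : ∀ᶠ t in nhdsWithin (0:ℝ) (Set.Ioi 0), 0 ≤ ψ t) : 0 ≤ d := by
  have ht : Filter.Tendsto (slope ψ 0) (nhdsWithin (0:ℝ) (Set.Ioi 0)) (nhds d) :=
    (hasDerivAt_iff_tendsto_slope.mp hψ).mono_left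
      (nhdsWithin_mono _ fun t ht => ne_of_gt ht)
  refine ge_of_tendsto ht ?_
  filter_upwards [hnn, self_mem_nhdsWithin] with t h1 h2
  have hs : slope ψ 0 t = ψ t / t := by simp [slope_def_field, h0]
  rw [hs]
  exact div_nonneg h1 (le_of_lt h2)

lemma line_hasDerivAt (q v : Fin n → ℝ) (t : ℝ) :
    HasDerivAt (fun s : ℝ => q + s • v) v t := by
  simpa using ((hasDerivAt_id t).smul_const v).const_add q

lemma secondDeriv_nonneg_at_localMin (hU : IsOpen U) (hf : ContDiffOn ℝ 2 f U)
    (hq : q ∈ U) (hmin : IsLocalMin f q) (v : Fin n → ℝ) :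
    0 ≤ fderiv ℝ (fun y => fderiv ℝ f y v) q v := by
  by_contra hc
  push_neg at hc
  set φ : (Fin n → ℝ) → ℝ := fun y => fderiv ℝ f y v with hφ
  set c := fderiv ℝ φ q v with hcdef
  have hφq : φ q = 0 := by
    rw [hφ]; simp [hmin.fderiv_eq_zero]
  have hφdiff : DifferentiableAt ℝ φ q := key1 hU hf hq v
  have hh : HasDerivAt (fun t : ℝ => φ (q + t • v)) c 0 := by
    have hfd : HasFDerivAt φ (fderiv ℝ φ q) (q + (0:ℝ) • v) := by
      rw [show q + (0:ℝ) • v = q by simp]; exact hφdiff.hasFDerivAt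
    have := hfd.comp_hasDerivAt 0 (line_hasDerivAt q v 0)
    exact this
  have hslope : Filter.Tendsto (slope (fun t : ℝ => φ (q + t • v)) 0)
      (nhdsWithin (0:ℝ) (Set.Ioi 0)) (nhds c) :=
    (hasDerivAt_iff_tendsto_slope.mp hh).mono_left
      (nhdsWithin_mono _ fun t ht => ne_of_gt ht)
  have hev1 : ∀ᶠ t in nhdsWithin (0:ℝ) (Set.Ioi 0), φ (q + t • v) < 0 := by
    have h2 : ∀ᶠ t in nhdsWithin (0:ℝ) (Set.Ioi 0),
        slope (fun t : ℝ => φ (q + t • v)) 0 t < 0 :=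
      hslope.eventually (gt_mem_nhds hc)
    filter_upwards [h2, self_mem_nhdsWithin] with t h1 ht
    have hs : slope (fun t : ℝ => φ (q + t • v)) 0 t = φ (q + t • v) / t := by
      simp [slope_def_field, hφq]
    rw [hs] at h1
    rcases div_neg_iff.mp h1 with ⟨_, h⟩ | ⟨h, _⟩
    · exact absurd ht (not_lt.mpr h.le)
    · exact h
  -- eventually the segment stays in U and f (q + t v) ≥ f q
  have hcont : Continuous (fun t : ℝ => q + t • v) :=
    continuous_const.add (continuous_id.smul continuous_const)
  have hev2 : ∀ᶠ t in nhds (0:ℝ), q + t • v ∈ U := by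
    have : U ∈ nhds (q + (0:ℝ) • v) := by simpa using hU.mem_nhds hq
    exact hcont.continuousAt.eventually_mem this
  have hev3 : ∀ᶠ t in nhds (0:ℝ), f q ≤ f (q + t • v) := by
    have := hmin
    have h4 : ∀ᶠ y in nhds q, f q ≤ f y := hmin
    have : (fun t : ℝ => q + t • v) ⁻¹' {y | f q ≤ f y} ∈ nhds (0:ℝ) := by
      apply hcont.continuousAt.preimage_mem_nhds
      rw [zero_smul, add_zero]; exact h4
    exact this
  obtain ⟨δ, hδpos, hδ⟩ : ∃ δ > 0, Set.Ioo (0:ℝ) δ ⊆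
      {t | φ (q + t • v) < 0 ∧ (q + t • v ∈ U ∧ f q ≤ f (q + t • v))} := by
    have := hev1.and ((hev2.and hev3).filter_mono nhdsWithin_le_nhds)
    rcases mem_nhdsGT_iff_exists_Ioo_subset.mp this with ⟨δ, hδ, hsub⟩
    exact ⟨δ, hδ, hsub⟩
  set t₁ := δ / 2 with ht₁
  have ht₁mem : t₁ ∈ Set.Ioo (0:ℝ) δ := ⟨by positivity, by simp [ht₁]; linarith⟩
  have hmemU : ∀ t ∈ Set.Icc (0:ℝ) t₁, q + t • v ∈ U := by
    intro t ⟨h0, h1⟩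
    rcases eq_or_lt_of_le h0 with rfl | hpos
    · simpa using hq
    · exact (hδ ⟨hpos, lt_of_le_of_lt h1 ht₁mem.2⟩).2.1
  have hanti : StrictAntiOn (fun t : ℝ => f (q + t • v)) (Set.Icc 0 t₁) := by
    apply strictAntiOn_of_deriv_neg (convex_Icc 0 t₁)
    · exact (hf.continuousOn.comp hcont.continuousOn (fun t ht => hmemU t ht))
    · intro t ht
      rw [interior_Icc] at ht
      have htm : t ∈ Set.Ioo (0:ℝ) δ := ⟨ht.1, lt_trans ht.2 ht₁mem.2⟩
      have hdiff : DifferentiableAt ℝ f (q + t • v) :=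
        (hf.differentiableOn (by norm_num)).differentiableAt
          (hU.mem_nhds (hδ htm).2.1)
      have hd : HasDerivAt (fun t : ℝ => f (q + t • v)) (φ (q + t • v)) t := by
        have := hdiff.hasFDerivAt.comp_hasDerivAt t (line_hasDerivAt q v t)
        exact this
      rw [hd.deriv]
      exact (hδ htm).1
  have h1 : f (q + t₁ • v) < f (q + (0:ℝ) • v) :=
    hanti ⟨le_refl 0, ht₁mem.1.le⟩ ⟨ht₁mem.1.le, le_refl t₁⟩ ht₁mem.1
  have h2 : f q ≤ f (q + t₁ • v) := (hδ ht₁mem).2.2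
  simp only [zero_smul, add_zero] at h1
  linarith

lemma laplacian_nonneg_at_localMin (hU : IsOpen U) (hf : ContDiffOn ℝ 2 f U)
    (hq : q ∈ U) (hmin : IsLocalMin f q) : 0 ≤ laplacian f q :=
  Finset.sum_nonneg fun i _ => secondDeriv_nonneg_at_localMin hU hf hq hmin _

end MinLemmas


section Barrier
variable {n : ℕ}

def barQ (z x : Fin n → ℝ) : ℝ := ∑ i, (x i - z i) ^ 2

noncomputable def barLQ (z x : Fin n → ℝ) : (Fin n → ℝ) →L[ℝ] ℝ :=
  ∑ i, (2 * (x i - z i)) • (ContinuousLinearMap.proj i)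

noncomputable def barW (z : Fin n → ℝ) (α : ℝ) (x : Fin n → ℝ) : ℝ :=
  Real.exp (-α * barQ z x)

lemma barQ_contDiff (z : Fin n → ℝ) : ContDiff ℝ 2 (barQ z) :=
  ContDiff.sum fun i _ =>
    (((ContinuousLinearMap.proj i : (Fin n → ℝ) →L[ℝ] ℝ).contDiff).sub contDiff_const).pow 2

lemma barW_contDiff (z : Fin n → ℝ) (α : ℝ) : ContDiff ℝ 2 (barW z α) :=
  Real.contDiff_exp.comp (contDiff_const.mul (barQ_contDiff z))

lemma barQ_hasFDerivAt (z x : Fin n → ℝ) : HasFDerivAt (barQ z) (barLQ z x) x := by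
  unfold barQ barLQ
  apply HasFDerivAt.fun_sum
  intro i _
  have hproj : HasFDerivAt (fun x : Fin n → ℝ => x i)
      ((ContinuousLinearMap.proj i : (Fin n → ℝ) →L[ℝ] ℝ)) x :=
    hasFDerivAt_apply (𝕜 := ℝ) i x
  have hsub := hproj.sub_const (z i)
  have hmul : HasFDerivAt (fun x : Fin n → ℝ => (x i - z i) * (x i - z i)) _ x := hsub.mul hsub
  have heq : (fun x : Fin n → ℝ => (x i - z i) * (x i - z i))
      = fun x : Fin n → ℝ => (x i - z i) ^ 2 := by funext y; ring
  rw [heq] at hmul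
  refine hmul.congr_fderiv ?_
  ext w
  simp [ContinuousLinearMap.smul_apply]
  ring

lemma barLQ_apply (z x w : Fin n → ℝ) : barLQ z x w = ∑ i, 2 * (x i - z i) * w i := by
  unfold barLQ
  simp [ContinuousLinearMap.sum_apply, ContinuousLinearMap.smul_apply,
    ContinuousLinearMap.proj_apply, smul_eq_mul, mul_assoc]

lemma barLQ_single (z x : Fin n → ℝ) (i : Fin n) :
    barLQ z x (Pi.single i 1) = 2 * (x i - z i) := by
  rw [barLQ_apply]
  rw [Finset.sum_eq_single i]
  · simp
  · intro j _ hj; simp [Pi.single_eq_of_ne hj]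
  · simp

lemma barW_hasFDerivAt (z : Fin n → ℝ) (α : ℝ) (x : Fin n → ℝ) :
    HasFDerivAt (barW z α) ((-α * barW z α x) • barLQ z x) x := by
  have hQ := barQ_hasFDerivAt z x
  have hexp : HasDerivAt (fun s : ℝ => Real.exp (-α * s))
      (Real.exp (-α * barQ z x) * (-α)) (barQ z x) := by
    have h1 : HasDerivAt (fun s : ℝ => -α * s) (-α) (barQ z x) := by
      simpa using (hasDerivAt_id (barQ z x)).const_mul (-α)
    exact h1.exp
  have := hexp.comp_hasFDerivAt x hQ
  unfold barW
  refine this.congr_fderiv ?_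
  congr 1
  ring

lemma fderiv_barW (z : Fin n → ℝ) (α : ℝ) (y : Fin n → ℝ) (i : Fin n) :
    fderiv ℝ (barW z α) y (Pi.single i 1) = (-2 * α) * (y i - z i) * barW z α y := by
  rw [(barW_hasFDerivAt z α y).fderiv]
  simp only [ContinuousLinearMap.smul_apply, barLQ_single, smul_eq_mul]
  ring

lemma laplacian_barW (z : Fin n → ℝ) (α : ℝ) (x : Fin n → ℝ) :
    laplacian (barW z α) x = barW z α x * (4 * α ^ 2 * barQ z x - 2 * α * n) := by
  unfold laplacian
  have hterm : ∀ i : Fin n,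
      fderiv ℝ (fun y => fderiv ℝ (barW z α) y (Pi.single i 1)) x (Pi.single i 1)
      = barW z α x * (4 * α ^ 2 * (x i - z i) ^ 2 - 2 * α) := by
    intro i
    have heq : (fun y => fderiv ℝ (barW z α) y (Pi.single i 1))
        = fun y => (-2 * α) * (y i - z i) * barW z α y := by
      funext y; exact fderiv_barW z α y i
    rw [heq]
    have hA : HasFDerivAt (fun y : Fin n → ℝ => (-2 * α) * (y i - z i))
        ((-2 * α) • (ContinuousLinearMap.proj i : (Fin n → ℝ) →L[ℝ] ℝ)) x :=
      ((hasFDerivAt_apply (𝕜 := ℝ) i x).sub_const (z i)).const_mul (-2 * α)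
    have hprod := hA.mul (barW_hasFDerivAt z α x)
    rw [show (fun y => -2 * α * (y i - z i) * barW z α y)
        = ((fun y => -2 * α * (y i - z i)) * barW z α) from rfl, hprod.fderiv]
    simp [ContinuousLinearMap.add_apply, ContinuousLinearMap.smul_apply,
      barLQ_single, ContinuousLinearMap.proj_apply, smul_eq_mul]
    ring
  rw [Finset.sum_congr rfl fun i _ => hterm i, ← Finset.mul_sum]
  congr 1
  rw [Finset.sum_sub_distrib, Finset.sum_const, Finset.card_univ, Fintype.card_fin,
    ← Finset.mul_sum]
  unfold barQ
  simp only [nsmul_eq_mul]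
  ring

end Barrier

section MorePlumb
variable {n : ℕ} {U : Set (Fin n → ℝ)} {f g : (Fin n → ℝ) → ℝ} {x : Fin n → ℝ}

lemma lap_sub (hU : IsOpen U) (hf : ContDiffOn ℝ 2 f U) (hg : ContDiffOn ℝ 2 g U)
    (hx : x ∈ U) :
    laplacian (fun y => f y - g y) x = laplacian f x - laplacian g x := by
  have h1 : (fun y => f y - g y) = fun y => f y + (-1 : ℝ) * g y := by funext y; ring
  rw [h1, lap_add hU hf (contDiffOn_const.mul hg) hx, lap_const_mul hU hg hx (-1)]
  ring

lemma lap_sub_const (hU : IsOpen U) (hf : ContDiffOn ℝ 2 f U) (hx : x ∈ U) (c : ℝ) :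
    laplacian (fun y => f y - c) x = laplacian f x := by
  rw [lap_sub hU hf contDiffOn_const hx, lap_const, sub_zero]

lemma lap_sum {ι : Type*} [DecidableEq ι] (hU : IsOpen U) (s : Finset ι)
    {g : ι → (Fin n → ℝ) → ℝ} (hg : ∀ j ∈ s, ContDiffOn ℝ 2 (g j) U) (hx : x ∈ U) :
    laplacian (fun y => ∑ j ∈ s, g j y) x = ∑ j ∈ s, laplacian (g j) x := by
  induction s using Finset.induction with
  | empty => simpa using lap_const (n := n) (x := x) 0
  | @insert a s' hja ih =>
    have h1 : (fun y => ∑ j ∈ insert a s', g j y)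
        = fun y => g a y + ∑ j ∈ s', g j y := by
      funext y; rw [Finset.sum_insert hja]
    rw [h1, Finset.sum_insert hja,
      lap_add hU (hg a (Finset.mem_insert_self a s'))
        (ContDiffOn.sum fun j hj => hg j (Finset.mem_insert_of_mem hj)) hx,
      ih fun j hj => hg j (Finset.mem_insert_of_mem hj)]

end MorePlumb

section Hopf
variable {n : ℕ}

lemma dist_le_of_barQ_le {z x : Fin n → ℝ} {c : ℝ} (h : barQ z x ≤ c ^ 2) (hc : 0 ≤ c) :
    dist x z ≤ c := by
  rw [dist_pi_le_iff hc]
  intro i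
  have h1 : (x i - z i) ^ 2 ≤ c ^ 2 :=
    le_trans (Finset.single_le_sum (f := fun i => (x i - z i) ^ 2)
      (fun i _ => sq_nonneg _) (Finset.mem_univ i)) h
  have h2 := Real.sqrt_le_sqrt h1
  rw [Real.sqrt_sq_eq_abs, Real.sqrt_sq hc] at h2
  rw [Real.dist_eq]
  exact h2

lemma barQ_nonneg (z x : Fin n → ℝ) : 0 ≤ barQ z x :=
  Finset.sum_nonneg fun i _ => sq_nonneg _

lemma barQ_line (z p : Fin n → ℝ) (t : ℝ) :
    barQ z (p + t • (z - p)) = (1 - t) ^ 2 * barQ z p := by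
  unfold barQ
  rw [Finset.mul_sum]
  refine Finset.sum_congr rfl fun i _ => ?_
  simp only [Pi.add_apply, Pi.smul_apply, Pi.sub_apply, smul_eq_mul]
  ring

set_option maxHeartbeats 2000000 in
lemma hopf_local {Ω : Set (Fin n → ℝ)} (hΩ : IsOpen Ω) {f : (Fin n → ℝ) → ℝ}
    (hf : ContDiffOn ℝ 2 f Ω) (hlap : ∀ x ∈ Ω, laplacian f x = 0)
    (hpos : ∀ x ∈ Ω, 0 ≤ f x) {xs : Fin n → ℝ} (hxs : xs ∈ Ω) (hfxs : f xs = 0)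
    {R : ℝ} (hR : 0 < R) (hRΩ : Metric.closedBall xs R ⊆ Ω) :
    ∀ z ∈ Metric.ball xs (R / (n + 2)), f z = 0 := by
  intro z hz
  by_contra hfz0
  set r₀ : ℝ := R / (n + 2) with hr₀def
  have hn2 : (0:ℝ) ≤ (n:ℝ) := Nat.cast_nonneg n
  have hr₀ : 0 < r₀ := by rw [hr₀def]; positivity
  have hzx : dist z xs < r₀ := Metric.mem_ball.mp hz
  have hr₀R : ((n:ℝ) + 1) * r₀ ≤ R := by
    have hden : (0:ℝ) < (n:ℝ) + 2 := by linarith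
    have h3 : ((n:ℝ)+2) * (R/((n:ℝ)+2)) = R := by field_simp
    have h2 : ((n:ℝ)+1) * (R/((n:ℝ)+2)) ≤ ((n:ℝ)+2) * (R/((n:ℝ)+2)) :=
      mul_le_mul_of_nonneg_right (by linarith) (by positivity)
    rw [hr₀def]
    linarith
  have hsubΩ : Metric.closedBall xs (((n:ℝ)+1) * r₀) ⊆ Ω :=
    (Metric.closedBall_subset_closedBall hr₀R).trans hRΩ
  have hzΩ : z ∈ Ω := by
    apply hRΩ
    apply Metric.mem_closedBall.mpr
    have : r₀ ≤ R := by nlinarith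
    linarith
  have hfz : 0 < f z := lt_of_le_of_ne (hpos z hzΩ) (fun h => hfz0 h.symm)
  set C := Metric.closedBall xs (((n:ℝ)+1) * r₀) with hCdef
  set Z := C ∩ f ⁻¹' {0} with hZdef
  have hZclosed : IsClosed Z :=
    ContinuousOn.preimage_isClosed_of_isClosed (hf.continuousOn.mono hsubΩ)
      Metric.isClosed_closedBall isClosed_singleton
  have hZcomp : IsCompact Z :=
    (isCompact_closedBall xs _).of_isClosed_subset hZclosed Set.inter_subset_left
  have hxsZ : xs ∈ Z := ⟨Metric.mem_closedBall_self (by positivity), hfxs⟩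
  obtain ⟨p, hpZ, hpmin⟩ := hZcomp.exists_isMinOn ⟨xs, hxsZ⟩
    ((barQ_contDiff z).continuous.continuousOn)
  set r2 := barQ z p with hr2
  have hpmin' : ∀ w ∈ Z, r2 ≤ barQ z w := fun w hw => hpmin hw
  have hr2pos : 0 < r2 := by
    rcases lt_or_eq_of_le (barQ_nonneg z p) with h | h
    · exact h
    · exfalso
      have hpz : p = z := by
        funext i
        have hterm : (p i - z i)^2 = 0 := by
          have h2 := (Finset.sum_eq_zero_iff_of_nonneg
            (fun i (_ : i ∈ Finset.univ) => sq_nonneg (p i - z i))).mp h.symm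
          exact h2 i (Finset.mem_univ i)
        have := pow_eq_zero_iff (n := 2) (by norm_num) |>.mp hterm
        linarith [sub_eq_zero.mp this]
      have : f z = 0 := by rw [← hpz]; exact hpZ.2
      exact hfz0 this
  have hr2le : r2 ≤ (n:ℝ) * r₀^2 := by
    have h1 : r2 ≤ barQ z xs := hpmin' xs hxsZ
    have h2 : barQ z xs ≤ (n:ℝ) * r₀^2 := by
      unfold barQ
      have hterm : ∀ i : Fin n, (xs i - z i)^2 ≤ r₀^2 := by
        intro i
        have hd : |xs i - z i| ≤ dist xs z := by
          rw [← Real.dist_eq]; exact dist_le_pi_dist xs z i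
        have hd2 : dist xs z < r₀ := by rw [dist_comm]; exact hzx
        nlinarith [abs_nonneg (xs i - z i), sq_abs (xs i - z i)]
      calc ∑ i, (xs i - z i)^2 ≤ ∑ _i : Fin n, r₀^2 :=
            Finset.sum_le_sum fun i _ => hterm i
        _ = (n:ℝ) * r₀^2 := by simp [Finset.sum_const, mul_comm]
    linarith
  have hmemC : ∀ x : Fin n → ℝ, barQ z x ≤ r2 → x ∈ C := by
    intro x hx
    have hnn : (n:ℝ) ≤ (n:ℝ)^2 := by
      have : n ≤ n^2 := Nat.le_self_pow two_ne_zero n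
      exact_mod_cast this
    have hdxz : dist x z ≤ (n:ℝ) * r₀ := by
      apply dist_le_of_barQ_le (c := (n:ℝ) * r₀) _ (by positivity)
      calc barQ z x ≤ r2 := hx
        _ ≤ (n:ℝ) * r₀^2 := hr2le
        _ ≤ ((n:ℝ) * r₀)^2 := by nlinarith [sq_nonneg r₀]
    have htri : dist x xs ≤ (n:ℝ) * r₀ + r₀ := by
      calc dist x xs ≤ dist x z + dist z xs := dist_triangle x z xs
        _ ≤ (n:ℝ) * r₀ + r₀ := by linarith
    exact Metric.mem_closedBall.mpr (by linarith)
  have hmemΩ : ∀ x : Fin n → ℝ, barQ z x ≤ r2 → x ∈ Ω := fun x hx => hsubΩ (hmemC x hx)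
  have hnozero : ∀ x : Fin n → ℝ, barQ z x < r2 → 0 < f x := by
    intro x hx
    rcases lt_or_eq_of_le (hpos x (hmemΩ x hx.le)) with h | h
    · exact h
    · exfalso
      have hxZ : x ∈ Z := ⟨hmemC x hx.le, by simp [← h]⟩
      exact absurd (hpmin' x hxZ) (not_le.mpr hx)
  have hpΩ : p ∈ Ω := hmemΩ p le_rfl
  have hfp : f p = 0 := hpZ.2
  have hminp : IsLocalMin f p := by
    filter_upwards [hΩ.mem_nhds hpΩ] with y hy
    rw [hfp]; exact hpos y hy
  set α := (2 * (n:ℝ) + 1) / r2 with hαdef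
  have hαpos : 0 < α := by rw [hαdef]; positivity
  have hαr2 : α * r2 = 2 * (n:ℝ) + 1 := div_mul_cancel₀ _ (ne_of_gt hr2pos)
  set A := {x : Fin n → ℝ | r2/4 ≤ barQ z x ∧ barQ z x ≤ r2} with hAdef
  have hAclosed : IsClosed A := by
    have h : A = barQ z ⁻¹' (Set.Icc (r2/4) r2) := rfl
    rw [h]; exact isClosed_Icc.preimage (barQ_contDiff z).continuous
  have hAsub : A ⊆ Metric.closedBall z (r2 + 1) := by
    intro x hx
    exact Metric.mem_closedBall.mpr
      (dist_le_of_barQ_le (le_trans hx.2 (by nlinarith)) (by linarith))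
  have hAcomp : IsCompact A :=
    (isCompact_closedBall z (r2+1)).of_isClosed_subset hAclosed hAsub
  have hAΩ : A ⊆ Ω := fun x hx => hmemΩ x hx.2
  have hpA : p ∈ A := ⟨by linarith, le_rfl⟩
  have hWcd : ContDiffOn ℝ 2 (fun x => barW z α x - Real.exp (-α * r2)) Ω :=
    ((barW_contDiff z α).contDiffOn).sub contDiffOn_const
  obtain ⟨ε, hεpos, hεS⟩ : ∃ ε > 0, ∀ x : Fin n → ℝ, barQ z x = r2/4 → ε ≤ f x := by
    set S := barQ z ⁻¹' {r2/4} with hSdef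
    have hSclosed : IsClosed S := isClosed_singleton.preimage (barQ_contDiff z).continuous
    have hSsubA : S ⊆ A := by
      intro x hx
      have h : barQ z x = r2/4 := hx
      exact ⟨le_of_eq h.symm, by rw [h]; linarith⟩
    have hScomp : IsCompact S := hAcomp.of_isClosed_subset hSclosed hSsubA
    rcases Set.eq_empty_or_nonempty S with hSe | hSne
    · exact ⟨1, one_pos, fun x hx => absurd (show x ∈ S from hx) (by rw [hSe]; simp)⟩
    · obtain ⟨xm, hxmS, hxmmin⟩ := hScomp.exists_isMinOn hSne
        (hf.continuousOn.mono (hSsubA.trans hAΩ))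
      refine ⟨f xm, hnozero xm ?_, fun x hx => hxmmin (show x ∈ S from hx)⟩
      rw [show barQ z xm = r2/4 from hxmS]; linarith
  set c0 := Real.exp (-α * r2) with hc0
  have hc0pos : 0 < c0 := Real.exp_pos _
  set g := fun x => f x - ε * (barW z α x - c0) with hgdef
  have hgC2 : ContDiffOn ℝ 2 g Ω := hf.sub (contDiffOn_const.mul hWcd)
  have hwA : ∀ x ∈ A, 0 < laplacian (barW z α) x := by
    intro x hx
    rw [laplacian_barW]
    apply mul_pos (Real.exp_pos _)
    have h1 : r2/4 ≤ barQ z x := hx.1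
    nlinarith [hαpos, hαr2, sq_nonneg α]
  have hlapg : ∀ x ∈ A, laplacian g x < 0 := by
    intro x hx
    have hxΩ := hAΩ hx
    rw [hgdef]
    rw [lap_sub hΩ hf (contDiffOn_const.mul hWcd) hxΩ,
      lap_const_mul hΩ hWcd hxΩ ε,
      lap_sub_const hΩ (barW_contDiff z α).contDiffOn hxΩ c0,
      hlap x hxΩ]
    have := hwA x hx
    nlinarith
  have hgpos : ∀ x ∈ A, 0 ≤ g x := by
    obtain ⟨q, hqA, hqmin⟩ := hAcomp.exists_isMinOn ⟨p, hpA⟩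
      ((hf.continuousOn.mono hAΩ).sub (continuousOn_const.mul
        (((barW_contDiff z α).continuous.continuousOn).sub continuousOn_const)))
    intro x hx
    have hq : 0 ≤ g q := by
      rcases eq_or_lt_of_le hqA.1 with h1 | h1
      · have hfq : ε ≤ f q := hεS q h1.symm
        have hv1 : barW z α q - c0 ≤ 1 := by
          have hb : barW z α q ≤ 1 := by
            apply Real.exp_le_one_iff.mpr
            have := barQ_nonneg z q
            nlinarith
          linarith
        rw [hgdef]
        simp only []
        nlinarith
      · rcases eq_or_lt_of_le hqA.2 with h2 | h2
        · have hW0 : barW z α q = c0 := by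
            rw [hc0]
            show Real.exp (-α * barQ z q) = Real.exp (-α * r2)
            rw [h2]
          rw [hgdef]
          simp only [hW0, sub_self, mul_zero]
          rw [sub_zero]
          exact hpos q (hAΩ hqA)
        · exfalso
          set O := {x : Fin n → ℝ | r2/4 < barQ z x ∧ barQ z x < r2} with hOdef
          have hOopen : IsOpen O := by
            have h : O = barQ z ⁻¹' (Set.Ioo (r2/4) r2) := rfl
            rw [h]; exact isOpen_Ioo.preimage (barQ_contDiff z).continuous
          have hqO : q ∈ O := ⟨h1, h2⟩
          have hlocal : IsLocalMin g q := hqmin.isLocalMin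
            (Filter.mem_of_superset (hOopen.mem_nhds hqO) fun x hx => ⟨hx.1.le, hx.2.le⟩)
          exact absurd (laplacian_nonneg_at_localMin hΩ hgC2 (hAΩ hqA) hlocal)
            (not_le.mpr (hlapg q hqA))
    exact le_trans hq (hqmin hx)
  -- Hopf derivative contradiction at p
  have hWp : barW z α p = c0 := by
    rw [hc0]
    show Real.exp (-α * barQ z p) = Real.exp (-α * r2)
    rw [← hr2]
  have hgp : g p = 0 := by
    rw [hgdef]
    simp only [hfp, hWp, sub_self, mul_zero, zero_sub, neg_eq_zero]
  set dvec := z - p with hdvec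
  have hline0 : p + (0:ℝ) • dvec = p := by simp
  have hfd : HasDerivAt (fun t : ℝ => f (p + t • dvec)) 0 0 := by
    have hdf : DifferentiableAt ℝ f p := diffAt_of_C2 hΩ hf hpΩ
    have hfd0 : HasFDerivAt f (fderiv ℝ f p) (p + (0:ℝ) • dvec) := by
      rw [hline0]; exact hdf.hasFDerivAt
    have h := hfd0.comp_hasDerivAt 0 (line_hasDerivAt p dvec 0)
    have hz0 : fderiv ℝ f p = 0 := hminp.fderiv_eq_zero
    rw [hz0, ContinuousLinearMap.zero_apply] at h
    exact h
  have hwd : HasDerivAt (fun t : ℝ => barW z α (p + t • dvec)) (2 * α * r2 * c0) 0 := by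
    have hfd0 : HasFDerivAt (barW z α) ((-α * barW z α p) • barLQ z p) (p + (0:ℝ) • dvec) := by
      rw [hline0]; exact barW_hasFDerivAt z α p
    have h := hfd0.comp_hasDerivAt 0 (line_hasDerivAt p dvec 0)
    have hval : ((-α * barW z α p) • barLQ z p) dvec = 2 * α * r2 * c0 := by
      rw [ContinuousLinearMap.smul_apply, barLQ_apply]
      have hsum : ∑ i, 2 * (p i - z i) * dvec i = -2 * r2 := by
        rw [hr2]
        unfold barQ
        rw [Finset.mul_sum]
        refine Finset.sum_congr rfl fun i _ => ?_
        rw [hdvec]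
        simp only [Pi.sub_apply]
        ring
      rw [hsum, hWp, smul_eq_mul]
      ring
    rw [← hval]
    exact h
  have hψd : HasDerivAt (fun t : ℝ => g (p + t • dvec)) (-(ε * (2 * α * r2 * c0))) 0 := by
    have h2 : HasDerivAt (fun t : ℝ => ε * (barW z α (p + t • dvec) - c0))
        (ε * (2 * α * r2 * c0)) 0 := by
      have := (hwd.sub_const c0).const_mul ε
      simpa using this
    have := hfd.sub h2
    rw [zero_sub] at this
    exact this
  have hψ0 : (fun t : ℝ => g (p + t • dvec)) 0 = 0 := by
    simp only [hline0, hgp]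
  have hev : ∀ᶠ t in nhdsWithin (0:ℝ) (Set.Ioi 0), 0 ≤ g (p + t • dvec) := by
    filter_upwards [Ioo_mem_nhdsGT_of_mem
      (Set.left_mem_Ico.mpr (by norm_num : (0:ℝ) < 1/2))] with t ht
    apply hgpos
    rw [hdvec]
    have h12 : 0 < 1/2 - t := by linarith [ht.2]
    have h32 : 0 < 3/2 - t := by linarith [ht.2]
    have h2t : 0 < 2 - t := by linarith [ht.2]
    constructor
    · rw [barQ_line, ← hr2]
      nlinarith [mul_pos (mul_pos h12 h32) hr2pos]
    · rw [barQ_line, ← hr2]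
      nlinarith [mul_pos (mul_pos ht.1 h2t) hr2pos]
  have hd := slope_nonneg hψd hψ0 hev
  have hprod : 0 < ε * (2 * α * r2 * c0) := by positivity
  linarith

lemma strong_min {Ω : Set (Fin n → ℝ)} (hΩ : IsOpen Ω) (hconn : IsPreconnected Ω)
    {f : (Fin n → ℝ) → ℝ} (hf : ContDiffOn ℝ 2 f Ω)
    (hlap : ∀ x ∈ Ω, laplacian f x = 0) (hpos : ∀ x ∈ Ω, 0 ≤ f x)
    {x₀ : Fin n → ℝ} (hx₀ : x₀ ∈ Ω) (h0 : f x₀ = 0) : ∀ x ∈ Ω, f x = 0 := by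
  classical
  set U : Set (Fin n → ℝ) := {x | x ∈ Ω ∧ f x = 0} with hUdef
  set V : Set (Fin n → ℝ) := {x | x ∈ Ω ∧ f x ≠ 0} with hVdef
  have hUopen : IsOpen U := by
    rw [Metric.isOpen_iff]
    intro x ⟨hxΩ, hfx⟩
    rcases Metric.isOpen_iff.mp hΩ x hxΩ with ⟨ε, hε, hball⟩
    refine ⟨(ε / 2) / (n + 2), by positivity, fun z hz => ?_⟩
    have hcb : Metric.closedBall x (ε / 2) ⊆ Ω := fun y hy =>
      hball (lt_of_le_of_lt (Metric.mem_closedBall.mp hy) (by linarith))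
    have hz2 : z ∈ Metric.ball x ((ε/2) / (n + 2)) := hz
    have hfz := hopf_local hΩ hf hlap hpos hxΩ hfx (by positivity) hcb z hz2
    have hd : dist z x < ε := by
      have h1 : dist z x < (ε/2) / (n+2) := hz
      have h2 : (ε/2) / (n+2) ≤ ε/2 := by
        apply div_le_self (by positivity)
        have : (0:ℝ) ≤ (n:ℝ) := Nat.cast_nonneg n
        linarith
      linarith
    exact ⟨hball hd, hfz⟩
  have hVopen : IsOpen V := by
    rw [isOpen_iff_mem_nhds]
    intro x ⟨hxΩ, hfx⟩
    have hcont : ContinuousAt f x := (hf.continuousOn.continuousAt (hΩ.mem_nhds hxΩ))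
    have h1 : {y | f y ≠ 0} ∈ nhds x := hcont.preimage_mem_nhds (isOpen_ne.mem_nhds hfx)
    filter_upwards [h1, hΩ.mem_nhds hxΩ] with y hy1 hy2
    exact ⟨hy2, hy1⟩
  have hdisc : Disjoint U V := by
    rw [Set.disjoint_iff]
    rintro x ⟨⟨_, h1⟩, ⟨_, h2⟩⟩
    exact h2 h1
  have hcover : Ω ⊆ U ∪ V := fun x hx => by
    by_cases h : f x = 0
    · exact Or.inl ⟨hx, h⟩
    · exact Or.inr ⟨hx, h⟩
  have hne : (Ω ∩ U).Nonempty := ⟨x₀, hx₀, hx₀, h0⟩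
  have := hconn.subset_left_of_subset_union hUopen hVopen hdisc hcover hne
  exact fun x hx => (this hx).2

end Hopf

theorem stmt4 {m n : ℕ} (K : Set (Fin m → ℝ)) (hK : Convex ℝ K)
    (Ω : Set (Fin n → ℝ)) (hΩ : IsOpen Ω) (hconn : IsConnected Ω)
    (u : (Fin n → ℝ) → Fin m → ℝ)
    (hu : ∀ j, HarmonicOn (fun x => u x j) Ω)
    (hrange : ∀ x ∈ Ω, u x ∈ closure K)
    (x₀ : Fin n → ℝ) (hx₀ : x₀ ∈ Ω) (hfr : u x₀ ∈ frontier K) :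
    ∀ x ∈ Ω, u x ∈ frontier K := by
  classical
  by_cases hKi : (interior K).Nonempty
  · obtain ⟨a₀, ha₀⟩ := hKi
    have hux₀ : u x₀ ∉ interior K := hfr.2
    obtain ⟨ℓ, hℓ⟩ := geometric_hahn_banach_open_point hK.interior isOpen_interior hux₀
    set c := ℓ (u x₀) with hcdef
    have hle : ∀ y ∈ closure K, ℓ y ≤ c := by
      intro y hy
      have hseg : ∀ t : ℝ, t ∈ Set.Ioo (0:ℝ) 1 → (1 - t) • y + t • a₀ ∈ interior K :=
        fun t ht => hK.combo_closure_interior_mem_interior hy ha₀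
          (by linarith [ht.2]) ht.1 (by ring)
      have htd : Filter.Tendsto (fun t : ℝ => (1 - t) * ℓ y + t * ℓ a₀)
          (nhdsWithin 0 (Set.Ioi 0)) (nhds (ℓ y)) := by
        have hcont : Continuous fun t : ℝ => (1 - t) * ℓ y + t * ℓ a₀ := by continuity
        have h1 := (hcont.tendsto 0).mono_left
          (nhdsWithin_le_nhds (s := Set.Ioi (0:ℝ)))
        simpa using h1
      apply le_of_tendsto htd
      filter_upwards [Ioo_mem_nhdsGT_of_mem
        (Set.left_mem_Ico.mpr (by norm_num : (0:ℝ) < 1))] with t ht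
      have h1 := hℓ _ (hseg t ht)
      have h2 : (1 - t) * ℓ y + t * ℓ a₀ = ℓ ((1 - t) • y + t • a₀) := by
        rw [map_add, map_smul, map_smul]; simp [smul_eq_mul]
      rw [h2]
      exact h1.le
    set a : Fin m → ℝ := fun j => ℓ (fun k => if j = k then 1 else 0) with hadef
    have hrep : ∀ y : Fin m → ℝ, ℓ y = ∑ j, y j * a j := by
      intro y
      conv_lhs => rw [pi_eq_sum_univ y]
      rw [map_sum]
      exact Finset.sum_congr rfl fun j _ => by rw [map_smul, smul_eq_mul]
    set F := fun x => c - ∑ j, u x j * a j with hFdef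
    have hsumC2 : ContDiffOn ℝ 2 (fun x => ∑ j, u x j * a j) Ω :=
      ContDiffOn.sum fun j _ => (hu j).1.mul contDiffOn_const
    have hFC2 : ContDiffOn ℝ 2 F Ω := contDiffOn_const.sub hsumC2
    have hFlap : ∀ x ∈ Ω, laplacian F x = 0 := by
      intro x hx
      rw [hFdef]
      rw [show (fun x => c - ∑ j, u x j * a j)
        = fun x => (fun _ : Fin n → ℝ => c) x - (fun x => ∑ j, u x j * a j) x from rfl]
      rw [lap_sub hΩ contDiffOn_const hsumC2 hx, lap_const,
        lap_sum hΩ Finset.univ (fun j _ => (hu j).1.mul contDiffOn_const) hx]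
      have hterm : ∀ j : Fin m, laplacian (fun y => u y j * a j) x = 0 := by
        intro j
        have heq : (fun y => u y j * a j) = fun y => a j * u y j := by
          funext y; ring
        rw [heq, lap_const_mul hΩ (hu j).1 hx (a j), (hu j).2 x hx, mul_zero]
      rw [Finset.sum_congr rfl fun j _ => hterm j]
      simp
    have hFpos : ∀ x ∈ Ω, 0 ≤ F x := by
      intro x hx
      have h1 := hle (u x) (hrange x hx)
      rw [hrep (u x)] at h1
      rw [hFdef]
      simp only []
      linarith
    have hF0 : F x₀ = 0 := by
      rw [hFdef]
      simp only []
      rw [← hrep (u x₀), ← hcdef, sub_self]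
    have hall := strong_min hΩ hconn.isPreconnected hFC2 hFlap hFpos hx₀ hF0
    intro x hx
    have hcx : ℓ (u x) = c := by
      have h1 := hall x hx
      rw [hFdef] at h1
      simp only [] at h1
      rw [hrep (u x)]
      linarith
    refine ⟨hrange x hx, fun hint => ?_⟩
    exact absurd (hℓ _ hint) (by rw [hcx]; exact lt_irrefl c)
  · have hempty : interior K = ∅ := Set.not_nonempty_iff_eq_empty.mp hKi
    intro x hx
    refine ⟨hrange x hx, ?_⟩
    rw [hempty]
    simp
end

section
/- Let ρ₀ > 0, s ∈ (0, ρ₀), set for η ∈ [ρ₀, ρ₀+2s] the function g(η) = ρ₀²(3 + 6s/ρ₀)·log(ρ₀/η) + 3ρ₀(η − ρ₀). Then g(ρ₀) = 0, g(η) ≤ 0 for all η ∈ [ρ₀, ρ₀+2s], and the radial Laplacian in ℝ², Δg = g''(η) + g'(η)/η, satisfies Δg ≥ 1 on [ρ₀, ρ₀+2s]; moreover |g'(ρ₀)| = 6s. -/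
theorem stmt12 (ρ₀ s : ℝ) (hρ₀ : 0 < ρ₀) (hs : s ∈ Set.Ioo 0 ρ₀)
    (g : ℝ → ℝ)
    (hg : ∀ η, g η = ρ₀^2 * (3 + 6*s/ρ₀) * Real.log (ρ₀/η) + 3*ρ₀*(η - ρ₀)) :
    g ρ₀ = 0 ∧ (∀ η ∈ Set.Icc ρ₀ (ρ₀ + 2*s), g η ≤ 0) ∧
      (∀ η ∈ Set.Icc ρ₀ (ρ₀ + 2*s), 1 ≤ deriv (deriv g) η + deriv g η / η) ∧
      |deriv g ρ₀| = 6*s := by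
  obtain ⟨hs0, hsρ⟩ := hs
  have hρne : ρ₀ ≠ 0 := hρ₀.ne'
  set C : ℝ := ρ₀^2 * (3 + 6*s/ρ₀) with hC
  have hCval : C = 3*ρ₀^2 + 6*s*ρ₀ := by rw [hC]; field_simp
  -- derivative of g at positive points
  have hkey : ∀ a : ℝ, 0 < a → HasDerivAt g (3*ρ₀ - C/a) a := by
    intro a ha
    have hlog : HasDerivAt (fun η => Real.log ρ₀ - Real.log η) (-a⁻¹) a :=
      (Real.hasDerivAt_log ha.ne').const_sub _
    have h2 := (hlog.const_mul C).add
      (((hasDerivAt_id a).sub_const ρ₀).const_mul (3*ρ₀))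
    have h1 : HasDerivAt (fun η => C * (Real.log ρ₀ - Real.log η) + 3*ρ₀*(η-ρ₀))
        (3*ρ₀ - C/a) a := by
      exact h2.congr_deriv (by ring)
    apply h1.congr_of_eventuallyEq
    filter_upwards [eventually_gt_nhds ha] with η hη
    rw [hg, Real.log_div hρne hη.ne']
  have hderiv : ∀ a : ℝ, 0 < a → deriv g a = 3*ρ₀ - C/a :=
    fun a ha => (hkey a ha).deriv
  have hderiv2 : ∀ a : ℝ, 0 < a → deriv (deriv g) a = C/a^2 := by
    intro a ha
    have heq : deriv g =ᶠ[nhds a] fun η => 3*ρ₀ - C * η⁻¹ := by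
      filter_upwards [eventually_gt_nhds ha] with η hη
      rw [hderiv η hη, div_eq_mul_inv]
    rw [heq.deriv_eq]
    have h3 : HasDerivAt (fun η : ℝ => 3*ρ₀ - C * η⁻¹) (-(C * -(a^2)⁻¹)) a :=
      ((hasDerivAt_inv ha.ne').const_mul C).const_sub _
    rw [h3.deriv]
    field_simp
  refine ⟨?_, ?_, ?_, ?_⟩
  · rw [hg, div_self hρne, Real.log_one]; ring
  · intro η hη
    obtain ⟨hη1, hη2⟩ := hη
    have hηpos : 0 < η := lt_of_lt_of_le hρ₀ hη1
    have hC0 : 0 ≤ C := by nlinarith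
    have hL : Real.log (ρ₀/η) ≤ ρ₀/η - 1 :=
      Real.log_le_sub_one_of_pos (div_pos hρ₀ hηpos)
    have hmul : C * Real.log (ρ₀/η) ≤ C * (ρ₀/η - 1) :=
      mul_le_mul_of_nonneg_left hL hC0
    have h3 : C * (ρ₀/η - 1) + 3*ρ₀*(η-ρ₀) = (η - ρ₀) * (3*ρ₀*η - C) / η := by
      field_simp
      ring
    have h4 : (η - ρ₀) * (3*ρ₀*η - C) / η ≤ 0 := by
      apply div_nonpos_of_nonpos_of_nonneg _ hηpos.le
      apply mul_nonpos_of_nonneg_of_nonpos (by linarith)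
      nlinarith
    rw [hg]
    calc C * Real.log (ρ₀/η) + 3*ρ₀*(η - ρ₀) ≤ C * (ρ₀/η - 1) + 3*ρ₀*(η-ρ₀) := by
          linarith
      _ ≤ 0 := by rw [h3]; exact h4
  · intro η hη
    obtain ⟨hη1, hη2⟩ := hη
    have hηpos : 0 < η := lt_of_lt_of_le hρ₀ hη1
    have hval : deriv (deriv g) η + deriv g η / η = 3*ρ₀/η := by
      rw [hderiv2 η hηpos, hderiv η hηpos]
      field_simp
      ring
    rw [hval, le_div_iff₀ hηpos]
    nlinarith
  · rw [hderiv ρ₀ hρ₀]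
    have : 3*ρ₀ - C/ρ₀ = -(6*s) := by rw [hCval]; field_simp; ring
    rw [this, abs_neg, abs_of_nonneg (by linarith)]
end

section
/- Let γ : [0, r₁] → ℝ be absolutely continuous, nonnegative, and nondecreasing, and suppose there exist constants M, M' ≥ 0 and θ = 3/4 such that −M r^{3θ} ≤ −γ(r) + (r/2 + M' r^{1+θ}) γ'(r) for almost every 0 < r ≤ r₁. Then there is a constant C = C(M, M', r₁, γ(r₁)) such that γ(r) ≤ C r² for all 0 < r ≤ r₁. -/
open MeasureTheory

noncomputable def Pa (b x : ℝ) : ℝ := 1 + 2*b*x^((3:ℝ)/4)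
noncomputable def Fa (b x : ℝ) : ℝ := x ^ (-2:ℝ) * (Pa b x) ^ ((8:ℝ)/3)
noncomputable def Fa' (b x : ℝ) : ℝ :=
  (-2) * x ^ (-3:ℝ) * (Pa b x) ^ ((8:ℝ)/3)
  + x ^ (-2:ℝ) * (((8:ℝ)/3) * (Pa b x) ^ ((5:ℝ)/3) * (2*b*(((3:ℝ)/4) * x ^ (-(1:ℝ)/4))))

lemma rpow_div4 {x : ℝ} (hx : 0 < x) (m : ℕ) :
    x ^ ((m:ℝ)/4) = (x ^ ((1:ℝ)/4)) ^ (m:ℕ) := by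
  rw [← Real.rpow_natCast (x ^ ((1:ℝ)/4)) m, ← Real.rpow_mul hx.le]
  ring_nf

lemma rpow_div4_neg {x : ℝ} (hx : 0 < x) (m : ℕ) :
    x ^ (-(m:ℝ)/4) = ((x ^ ((1:ℝ)/4)) ^ (m:ℕ))⁻¹ := by
  rw [show -(m:ℝ)/4 = -((m:ℝ)/4) by ring, Real.rpow_neg hx.le, rpow_div4 hx]

lemma Pa_pos {b x : ℝ} (hb : 0 ≤ b) (hx : 0 ≤ x) : 0 < Pa b x := by
  have := Real.rpow_nonneg hx ((3:ℝ)/4)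
  unfold Pa; nlinarith

lemma Pa_one_le {b x : ℝ} (hb : 0 ≤ b) (hx : 0 ≤ x) : 1 ≤ Pa b x := by
  have := Real.rpow_nonneg hx ((3:ℝ)/4)
  unfold Pa; nlinarith

lemma Fa_pos {b x : ℝ} (hb : 0 ≤ b) (hx : 0 < x) : 0 < Fa b x := by
  have h1 := Real.rpow_pos_of_pos hx (-2:ℝ)
  have h2 := Real.rpow_pos_of_pos (Pa_pos hb hx.le) ((8:ℝ)/3)
  exact mul_pos h1 h2

lemma alg1 (b s A : ℝ) (hs : s ≠ 0) :
    ((-2) * (s^(12:ℕ))⁻¹ * (A * (1+2*b*s^(3:ℕ)))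
      + (s^(8:ℕ))⁻¹ * (((8:ℝ)/3) * A * (2*b*(((3:ℝ)/4) * (s^(1:ℕ))⁻¹))))
      * (s^(4:ℕ)/2 + b*s^(7:ℕ)) = -((s^(8:ℕ))⁻¹ * (A * (1+2*b*s^(3:ℕ)))) := by
  field_simp
  ring

lemma alg2 (b s A : ℝ) (hs : s ≠ 0) :
    (s^(8:ℕ))⁻¹ * (A * (1+2*b*s^(3:ℕ))) * s^(9:ℕ)
      = 2 * A * (s^(3:ℕ))⁻¹ * (s^(4:ℕ)/2 + b*s^(7:ℕ)) := by
  field_simp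

lemma Fa_deriv_mul (b : ℝ) (hb : 0 ≤ b) {x : ℝ} (hx : 0 < x) :
    Fa' b x * (x/2 + b * x^((7:ℝ)/4)) = - Fa b x := by
  set s := x ^ ((1:ℝ)/4) with hsdef
  have hs : 0 < s := Real.rpow_pos_of_pos hx _
  have e2 : x ^ (-2:ℝ) = (s^(8:ℕ))⁻¹ := by
    rw [show (-2:ℝ) = -((8:ℕ):ℝ)/4 by norm_num, rpow_div4_neg hx]
  have e3 : x ^ (-3:ℝ) = (s^(12:ℕ))⁻¹ := by
    rw [show (-3:ℝ) = -((12:ℕ):ℝ)/4 by norm_num, rpow_div4_neg hx]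
  have e34 : x ^ ((3:ℝ)/4) = s ^ (3:ℕ) := by
    rw [show ((3:ℝ)/4) = ((3:ℕ):ℝ)/4 by norm_num, rpow_div4 hx]
  have em14 : x ^ (-(1:ℝ)/4) = (s^(1:ℕ))⁻¹ := by
    rw [show (-(1:ℝ)/4) = -((1:ℕ):ℝ)/4 by norm_num, rpow_div4_neg hx]
  have e74 : x ^ ((7:ℝ)/4) = s ^ (7:ℕ) := by
    rw [show ((7:ℝ)/4) = ((7:ℕ):ℝ)/4 by norm_num, rpow_div4 hx]
  have ex : x = s ^ (4:ℕ) := by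
    have h : x ^ ((1:ℝ)) = x ^ (((4:ℕ):ℝ)/4) := by norm_num
    rw [Real.rpow_one, rpow_div4 hx] at h
    exact h
  have hP : 0 < Pa b x := Pa_pos hb hx.le
  have eP : (Pa b x) ^ ((8:ℝ)/3) = (Pa b x) ^ ((5:ℝ)/3) * Pa b x := by
    rw [show ((8:ℝ)/3) = (5:ℝ)/3 + 1 by norm_num, Real.rpow_add_one hP.ne']
  have ePP : Pa b x = 1 + 2*b*s^(3:ℕ) := by rw [Pa, e34]
  unfold Fa Fa'
  rw [eP, e2, e3, em14, e74, ePP]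
  conv_lhs => rw [ex]
  exact alg1 b s _ hs.ne'

lemma Fa_mul_rpow (b : ℝ) (hb : 0 ≤ b) {x : ℝ} (hx : 0 < x) :
    Fa b x * x ^ ((9:ℝ)/4)
      = 2 * (Pa b x) ^ ((5:ℝ)/3) * x ^ (-(3:ℝ)/4) * (x/2 + b * x^((7:ℝ)/4)) := by
  set s := x ^ ((1:ℝ)/4) with hsdef
  have hs : 0 < s := Real.rpow_pos_of_pos hx _
  have e2 : x ^ (-2:ℝ) = (s^(8:ℕ))⁻¹ := by
    rw [show (-2:ℝ) = -((8:ℕ):ℝ)/4 by norm_num, rpow_div4_neg hx]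
  have e34 : x ^ ((3:ℝ)/4) = s ^ (3:ℕ) := by
    rw [show ((3:ℝ)/4) = ((3:ℕ):ℝ)/4 by norm_num, rpow_div4 hx]
  have e94 : x ^ ((9:ℝ)/4) = s ^ (9:ℕ) := by
    rw [show ((9:ℝ)/4) = ((9:ℕ):ℝ)/4 by norm_num, rpow_div4 hx]
  have em34 : x ^ (-(3:ℝ)/4) = (s^(3:ℕ))⁻¹ := by
    rw [show (-(3:ℝ)/4) = -((3:ℕ):ℝ)/4 by norm_num, rpow_div4_neg hx]
  have e74 : x ^ ((7:ℝ)/4) = s ^ (7:ℕ) := by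
    rw [show ((7:ℝ)/4) = ((7:ℕ):ℝ)/4 by norm_num, rpow_div4 hx]
  have ex : x = s ^ (4:ℕ) := by
    have h : x ^ ((1:ℝ)) = x ^ (((4:ℕ):ℝ)/4) := by norm_num
    rw [Real.rpow_one, rpow_div4 hx] at h
    exact h
  have hP : 0 < Pa b x := Pa_pos hb hx.le
  have eP : (Pa b x) ^ ((8:ℝ)/3) = (Pa b x) ^ ((5:ℝ)/3) * Pa b x := by
    rw [show ((8:ℝ)/3) = (5:ℝ)/3 + 1 by norm_num, Real.rpow_add_one hP.ne']
  have ePP : Pa b x = 1 + 2*b*s^(3:ℕ) := by rw [Pa, e34]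
  unfold Fa
  rw [eP, ePP, e2, e94, em34, e74, ex]
  exact alg2 b s _ hs.ne'

lemma Fa_hasDerivAt (b : ℝ) {x : ℝ} (hx : 0 < x) : HasDerivAt (Fa b) (Fa' b x) x := by
  have h1 : HasDerivAt (fun y : ℝ => y ^ (-2:ℝ)) ((-2) * x ^ ((-2:ℝ)-1)) x :=
    Real.hasDerivAt_rpow_const (Or.inl hx.ne')
  have hPd : HasDerivAt (fun y : ℝ => 1 + 2*b*y^((3:ℝ)/4))
      ((2*b)*(((3:ℝ)/4) * x ^ ((3:ℝ)/4-1))) x :=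
    ((Real.hasDerivAt_rpow_const (Or.inl hx.ne')).const_mul (2*b)).const_add 1
  have h2 : HasDerivAt (fun y : ℝ => (1 + 2*b*y^((3:ℝ)/4)) ^ ((8:ℝ)/3))
      (((2*b)*(((3:ℝ)/4) * x ^ ((3:ℝ)/4-1))) * ((8:ℝ)/3) * (1 + 2*b*x^((3:ℝ)/4)) ^ ((8:ℝ)/3-1)) x :=
    hPd.rpow_const (Or.inr (by norm_num))
  have h3 : HasDerivAt (fun y : ℝ => y ^ (-2:ℝ) * (1 + 2*b*y^((3:ℝ)/4)) ^ ((8:ℝ)/3)) _ x := h1.mul h2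
  have hFa : Fa b = fun y : ℝ => y ^ (-2:ℝ) * (1 + 2*b*y^((3:ℝ)/4)) ^ ((8:ℝ)/3) := by
    funext y; simp [Fa, Pa]
  rw [hFa]
  have hFa' : Fa' b x =
      (-2) * x ^ (-3:ℝ) * (1 + 2*b*x^((3:ℝ)/4)) ^ ((8:ℝ)/3)
      + x ^ (-2:ℝ) * (((8:ℝ)/3) * (1 + 2*b*x^((3:ℝ)/4)) ^ ((5:ℝ)/3)
          * (2*b*(((3:ℝ)/4) * x ^ (-(1:ℝ)/4)))) := by
    simp [Fa', Pa]
  rw [hFa']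
  convert h3 using 1
  rw [show ((-2:ℝ)-1) = -3 by norm_num, show ((8:ℝ)/3-1) = (5:ℝ)/3 by norm_num,
    show ((3:ℝ)/4-1) = -(1:ℝ)/4 by norm_num]
  ring

lemma Fa'_continuousAt (b : ℝ) {x : ℝ} (hx : 0 < x) : ContinuousAt (Fa' b) x := by
  have c3 : ContinuousAt (fun y : ℝ => y ^ (-3:ℝ)) x :=
    Real.continuousAt_rpow_const x _ (Or.inl hx.ne')
  have c2 : ContinuousAt (fun y : ℝ => y ^ (-2:ℝ)) x :=
    Real.continuousAt_rpow_const x _ (Or.inl hx.ne')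
  have c14 : ContinuousAt (fun y : ℝ => y ^ (-(1:ℝ)/4)) x :=
    Real.continuousAt_rpow_const x _ (Or.inl hx.ne')
  have c34 : ContinuousAt (fun y : ℝ => y ^ ((3:ℝ)/4)) x :=
    Real.continuousAt_rpow_const x _ (Or.inl hx.ne')
  have cP : ContinuousAt (fun y : ℝ => 1 + 2*b*y^((3:ℝ)/4)) x :=
    continuousAt_const.add (continuousAt_const.mul c34)
  have cP83 : ContinuousAt (fun y : ℝ => (1 + 2*b*y^((3:ℝ)/4)) ^ ((8:ℝ)/3)) x :=
    cP.rpow_const (Or.inr (by norm_num))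
  have cP53 : ContinuousAt (fun y : ℝ => (1 + 2*b*y^((3:ℝ)/4)) ^ ((5:ℝ)/3)) x :=
    cP.rpow_const (Or.inr (by norm_num))
  have : ContinuousAt (fun y : ℝ =>
      (-2) * y ^ (-3:ℝ) * (1 + 2*b*y^((3:ℝ)/4)) ^ ((8:ℝ)/3)
      + y ^ (-2:ℝ) * (((8:ℝ)/3) * (1 + 2*b*y^((3:ℝ)/4)) ^ ((5:ℝ)/3)
          * (2*b*(((3:ℝ)/4) * y ^ (-(1:ℝ)/4))))) x :=
    ((continuousAt_const.mul c3).mul cP83).add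
      (c2.mul ((continuousAt_const.mul cP53).mul
        (continuousAt_const.mul (continuousAt_const.mul c14))))
  have hFa' : Fa' b = fun y : ℝ =>
      (-2) * y ^ (-3:ℝ) * (1 + 2*b*y^((3:ℝ)/4)) ^ ((8:ℝ)/3)
      + y ^ (-2:ℝ) * (((8:ℝ)/3) * (1 + 2*b*y^((3:ℝ)/4)) ^ ((5:ℝ)/3)
          * (2*b*(((3:ℝ)/4) * y ^ (-(1:ℝ)/4)))) := by
    funext y; simp [Fa', Pa]
  rw [hFa']
  exact this

lemma Fa'_nonpos (b : ℝ) (hb : 0 ≤ b) {x : ℝ} (hx : 0 < x) : Fa' b x ≤ 0 := by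
  have hD : 0 < x/2 + b * x^((7:ℝ)/4) := by positivity
  have hmul := Fa_deriv_mul b hb hx
  have hFa := Fa_pos hb hx
  nlinarith

lemma key_ineq (b M : ℝ) (hb : 0 ≤ b) {x : ℝ} (hx : 0 < x) (γx gx : ℝ)
    (h : -M * x ^ ((9:ℝ)/4) ≤ -γx + (x/2 + b * x ^ ((7:ℝ)/4)) * gx) :
    -(2*M * (Pa b x) ^ ((5:ℝ)/3)) * x ^ (-(3:ℝ)/4) ≤ gx * Fa b x + γx * Fa' b x := by
  have hD : 0 < x/2 + b * x ^ ((7:ℝ)/4) := by positivity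
  have hFa := Fa_pos hb hx
  have hmul := Fa_deriv_mul b hb hx
  have hFa' : Fa' b x = -Fa b x / (x/2 + b * x ^ ((7:ℝ)/4)) := by
    rw [eq_div_iff hD.ne']; linarith
  have h3 : gx * Fa b x + γx * Fa' b x
      = Fa b x / (x/2 + b * x ^ ((7:ℝ)/4)) * ((x/2 + b * x ^ ((7:ℝ)/4)) * gx - γx) := by
    rw [hFa']; field_simp; ring
  have h2 : -(2*M * (Pa b x) ^ ((5:ℝ)/3)) * x ^ (-(3:ℝ)/4)
      = Fa b x / (x/2 + b * x ^ ((7:ℝ)/4)) * (-M * x ^ ((9:ℝ)/4)) := by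
    have hid := Fa_mul_rpow b hb hx
    rw [div_mul_eq_mul_div, eq_div_iff hD.ne']
    linear_combination M * hid
  rw [h3, h2]
  apply mul_le_mul_of_nonneg_left _ (le_of_lt (div_pos hFa hD))
  linarith
set_option maxHeartbeats 2000000 in
theorem stmt13 (r₁ : ℝ) (hr₁ : 0 < r₁) (γ g : ℝ → ℝ)
    (hint : IntervalIntegrable g volume 0 r₁)
    (hAC : ∀ x ∈ Set.Icc (0:ℝ) r₁, γ x = γ 0 + ∫ t in (0:ℝ)..x, g t)
    (hnn : ∀ x ∈ Set.Icc (0:ℝ) r₁, 0 ≤ γ x)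
    (hmono : MonotoneOn γ (Set.Icc 0 r₁))
    (M M' : ℝ) (hM : 0 ≤ M) (hM' : 0 ≤ M')
    (hineq : ∀ᵐ r ∂(volume.restrict (Set.Ioc (0:ℝ) r₁)),
      -M * r ^ ((9:ℝ)/4) ≤ -γ r + (r/2 + M' * r ^ ((7:ℝ)/4)) * g r) :
    ∃ C : ℝ, ∀ r ∈ Set.Ioc (0:ℝ) r₁, γ r ≤ C * r^2 := by
  set K : ℝ := 2*M*(Pa M' r₁)^((5:ℝ)/3) with hKdef
  have hPr₁ : 0 < Pa M' r₁ := Pa_pos hM' hr₁.le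
  have hP53 : 0 < (Pa M' r₁)^((5:ℝ)/3) := Real.rpow_pos_of_pos hPr₁ _
  have hKnn : 0 ≤ K := by positivity
  refine ⟨γ r₁ * Fa M' r₁ + K * (4 * r₁ ^ ((1:ℝ)/4)), ?_⟩
  rintro a ⟨ha0, har⟩
  -- integrability of g on subintervals of [0, r₁]
  have hgsub : ∀ c d : ℝ, c ∈ Set.Icc (0:ℝ) r₁ → d ∈ Set.Icc (0:ℝ) r₁ →
      IntervalIntegrable g volume c d := by
    intro c d hc hd
    apply hint.mono_set
    apply Set.uIcc_subset_uIcc <;> rw [Set.uIcc_of_le hr₁.le] <;> assumption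
  -- the increment of γ is the integral of g
  have hγdiff : ∀ c d : ℝ, 0 ≤ c → c ≤ d → d ≤ r₁ → γ d - γ c = ∫ t in c..d, g t := by
    intro c d hc hcd hdr
    have hcm : c ∈ Set.Icc (0:ℝ) r₁ := ⟨hc, hcd.trans hdr⟩
    have hdm : d ∈ Set.Icc (0:ℝ) r₁ := ⟨hc.trans hcd, hdr⟩
    have h1 := hAC c hcm
    have h2 := hAC d hdm
    have hadd := intervalIntegral.integral_add_adjacent_intervals
      (hgsub 0 c ⟨le_rfl, hr₁.le⟩ hcm) (hgsub c d hcm hdm)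
    rw [h1, h2, ← hadd]; ring
  -- FTC for Fa
  have hFTC : ∀ c d : ℝ, 0 < c → c ≤ d →
      Fa M' d - Fa M' c = ∫ t in c..d, Fa' M' t := by
    intro c d hc hcd
    have hder : ∀ x ∈ Set.uIcc c d, HasDerivAt (Fa M') (Fa' M' x) x := by
      rw [Set.uIcc_of_le hcd]
      exact fun x hx => Fa_hasDerivAt M' (lt_of_lt_of_le hc hx.1)
    have hcont : ContinuousOn (Fa' M') (Set.uIcc c d) := by
      rw [Set.uIcc_of_le hcd]
      exact fun x hx => (Fa'_continuousAt M' (lt_of_lt_of_le hc hx.1)).continuousWithinAt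
    exact (intervalIntegral.integral_eq_sub_of_hasDerivAt hder
      (hcont.intervalIntegrable)).symm
  -- bound on Fa' on [a, r₁]
  obtain ⟨L₀, hL₀⟩ := (isCompact_Icc (a := a) (b := r₁)).exists_bound_of_continuousOn
    (fun x hx => (Fa'_continuousAt M' (lt_of_lt_of_le ha0 hx.1)).continuousWithinAt)
  set L : ℝ := max L₀ 0 with hLdef
  have hLnn : 0 ≤ L := le_max_right _ _
  have hL : ∀ x ∈ Set.Icc a r₁, |Fa' M' x| ≤ L := by
    intro x hx
    calc |Fa' M' x| = ‖Fa' M' x‖ := (Real.norm_eq_abs _).symm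
    _ ≤ L₀ := hL₀ x hx
    _ ≤ L := le_max_left _ _
  -- integrability facts on [a, r₁]
  have hgar : IntervalIntegrable g volume a r₁ := hgsub a r₁ ⟨ha0.le, har⟩ ⟨hr₁.le, le_rfl⟩
  have hconta : ∀ c d : ℝ, a ≤ c → c ≤ d →
      IntervalIntegrable (fun t : ℝ => t ^ (-(3:ℝ)/4)) volume c d := by
    intro c d hac hcd
    apply ContinuousOn.intervalIntegrable
    rw [Set.uIcc_of_le hcd]
    intro x hx
    exact (Real.continuousAt_rpow_const x _
      (Or.inl (lt_of_lt_of_le (lt_of_lt_of_le ha0 hac) hx.1).ne')).continuousWithinAt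
  set Ig : ℝ := ∫ t in a..r₁, |g t| with hIgdef
  have hIgnn : 0 ≤ Ig := intervalIntegral.integral_nonneg har (fun u _ => abs_nonneg _)
  set I₁ : ℝ := ∫ t in a..r₁, t ^ (-(3:ℝ)/4) with hI₁def
  -- MAIN STEP : γ a * Fa M' a ≤ γ r₁ * Fa M' r₁ + K * I₁
  have main : γ a * Fa M' a ≤ γ r₁ * Fa M' r₁ + K * I₁ := by
    apply le_of_forall_pos_le_add
    intro ε hε
    set W : ℝ := L * (r₁ - a) * Ig with hWdef
    have hWnn : 0 ≤ W := by
      apply mul_nonneg (mul_nonneg hLnn (by linarith)) hIgnn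
    obtain ⟨n, hn⟩ := exists_nat_gt (W / ε)
    have hn0 : 0 < (n:ℝ) := lt_of_le_of_lt (div_nonneg hWnn hε.le) hn
    set δ : ℝ := (r₁ - a)/n with hδdef
    have hδnn : 0 ≤ δ := div_nonneg (by linarith) hn0.le
    set x_ : ℕ → ℝ := fun k => a + k * δ with hxdef
    have hx0 : x_ 0 = a := by simp [hxdef]
    have hxn : x_ n = r₁ := by
      simp only [hxdef, hδdef]
      field_simp
      ring
    have hxa : ∀ k : ℕ, a ≤ x_ k := by
      intro k
      simp only [hxdef]
      nlinarith [Nat.cast_nonneg (α := ℝ) k, hδnn]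
    have hxstep : ∀ k : ℕ, x_ (k+1) - x_ k = δ := by
      intro k
      simp only [hxdef]
      push_cast
      ring
    have hxmono : ∀ k : ℕ, x_ k ≤ x_ (k+1) := by
      intro k
      have := hxstep k
      linarith
    have hxr : ∀ k : ℕ, k ≤ n → x_ k ≤ r₁ := by
      intro k hk
      have hkn : (k:ℝ) ≤ (n:ℝ) := Nat.cast_le.mpr hk
      have : x_ k ≤ x_ n := by
        simp only [hxdef]
        nlinarith [hδnn]
      rwa [hxn] at this
    have hxpos : ∀ k : ℕ, 0 < x_ k := fun k => lt_of_lt_of_le ha0 (hxa k)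
    -- the per-piece estimate
    have piece : ∀ k : ℕ, k < n →
        (∫ t in x_ k..x_ (k+1), ((-K) * t ^ (-(3:ℝ)/4) - (L*δ) * |g t|))
          ≤ γ (x_ (k+1)) * Fa M' (x_ (k+1)) - γ (x_ k) * Fa M' (x_ k) := by
      intro k hk
      set c := x_ k with hc
      set d := x_ (k+1) with hd
      have hcd : c ≤ d := hxmono k
      have hc0 : 0 < c := hxpos k
      have hd0 : 0 < d := hxpos (k+1)
      have hca : a ≤ c := hxa k
      have hdr : d ≤ r₁ := hxr (k+1) hk
      have hcr : c ≤ r₁ := hcd.trans hdr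
      have hstep : d - c = δ := hxstep k
      have hgcd : IntervalIntegrable g volume c d :=
        hgsub c d ⟨hc0.le, hcr⟩ ⟨hd0.le, hdr⟩
      have hFa'cont : ContinuousOn (Fa' M') (Set.uIcc c d) := by
        rw [Set.uIcc_of_le hcd]
        exact fun x hx => (Fa'_continuousAt M' (lt_of_lt_of_le hc0 hx.1)).continuousWithinAt
      have hFa'II : IntervalIntegrable (Fa' M') volume c d := hFa'cont.intervalIntegrable
      -- identity for the increment of u
      have hid : γ d * Fa M' d - γ c * Fa M' c
          = ∫ t in c..d, (γ c * Fa' M' t + Fa M' d * g t) := by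
        rw [intervalIntegral.integral_add (hFa'II.const_mul _) (hgcd.const_mul _),
          intervalIntegral.integral_const_mul, intervalIntegral.integral_const_mul,
          ← hFTC c d hc0 hcd, ← hγdiff c d hc0.le hcd hdr]
        ring
      rw [hid]
      -- compare integrands a.e.
      apply intervalIntegral.integral_mono_ae_restrict hcd
      · exact ((hconta c d hca hcd).const_mul (-K)).sub ((hgcd.abs).const_mul (L*δ))
      · exact (hFa'II.const_mul _).add (hgcd.const_mul _)
      · have hsub : Set.Icc c d ⊆ Set.Ioc 0 r₁ :=
          fun t ht => ⟨lt_of_lt_of_le hc0 ht.1, ht.2.trans hdr⟩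
        filter_upwards [ae_restrict_of_ae_restrict_of_subset hsub hineq,
          ae_restrict_mem measurableSet_Icc] with t ht htm
        have ht0 : 0 < t := lt_of_lt_of_le hc0 htm.1
        have htr : t ≤ r₁ := htm.2.trans hdr
        have hkey := key_ineq M' M hM' ht0 (γ t) (g t) ht
        -- (1) constant comparison
        have hPa_le : Pa M' t ≤ Pa M' r₁ := by
          have h34 : t ^ ((3:ℝ)/4) ≤ r₁ ^ ((3:ℝ)/4) :=
            Real.rpow_le_rpow ht0.le htr (by norm_num)
          unfold Pa; nlinarith
        have h1 : (-K) * t ^ (-(3:ℝ)/4) ≤ -(2*M * (Pa M' t)^((5:ℝ)/3)) * t ^ (-(3:ℝ)/4) := by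
          have hPt : 0 < Pa M' t := Pa_pos hM' ht0.le
          have h53 : (Pa M' t)^((5:ℝ)/3) ≤ (Pa M' r₁)^((5:ℝ)/3) :=
            Real.rpow_le_rpow hPt.le hPa_le (by norm_num)
          have htp : (0:ℝ) ≤ t ^ (-(3:ℝ)/4) := (Real.rpow_pos_of_pos ht0 _).le
          have : 2*M * (Pa M' t)^((5:ℝ)/3) ≤ K := by
            rw [hKdef]; nlinarith
          nlinarith
        -- (2) monotone comparison
        have h2 : γ t * Fa' M' t ≤ γ c * Fa' M' t := by
          have hγct : γ c ≤ γ t := hmono ⟨hc0.le, hcr⟩ ⟨ht0.le, htr⟩ htm.1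
          exact mul_le_mul_of_nonpos_right hγct (Fa'_nonpos M' hM' ht0)
        -- (3) Lipschitz comparison for Fa
        have h3 : Fa M' t * g t ≤ Fa M' d * g t + (L*δ) * |g t| := by
          have hFd : Fa M' d - Fa M' t = ∫ y in t..d, Fa' M' y := hFTC t d ht0 htm.2
          have hbound : |Fa M' d - Fa M' t| ≤ L * δ := by
            rw [hFd]
            have hnorm : ∀ y ∈ Set.uIoc t d, ‖Fa' M' y‖ ≤ L := by
              intro y hy
              rw [Set.uIoc_of_le htm.2] at hy
              exact hL y ⟨hca.trans (htm.1.trans hy.1.le), hy.2.trans hdr⟩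
            have := intervalIntegral.norm_integral_le_of_norm_le_const hnorm
            rw [Real.norm_eq_abs] at this
            calc |∫ y in t..d, Fa' M' y| ≤ L * |d - t| := this
            _ ≤ L * δ := by
              rw [abs_of_nonneg (by linarith [htm.2] : (0:ℝ) ≤ d - t)]
              have : d - t ≤ δ := by linarith [htm.1, hstep]
              nlinarith
          have habs : (Fa M' t - Fa M' d) * g t ≤ (L*δ) * |g t| := by
            calc (Fa M' t - Fa M' d) * g t ≤ |(Fa M' t - Fa M' d) * g t| := le_abs_self _
            _ = |Fa M' t - Fa M' d| * |g t| := abs_mul _ _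
            _ = |Fa M' d - Fa M' t| * |g t| := by rw [abs_sub_comm]
            _ ≤ (L*δ) * |g t| := mul_le_mul_of_nonneg_right hbound (abs_nonneg _)
          linarith
        linarith
    -- summation
    have hIIpiece : ∀ k : ℕ, k < n → IntervalIntegrable
        (fun t : ℝ => (-K) * t ^ (-(3:ℝ)/4) - (L*δ) * |g t|) volume (x_ k) (x_ (k+1)) := by
      intro k hk
      exact ((hconta (x_ k) (x_ (k+1)) (hxa k) (hxmono k)).const_mul (-K)).sub
        (((hgsub (x_ k) (x_ (k+1)) ⟨(hxpos k).le, hxr k hk.le⟩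
          ⟨(hxpos (k+1)).le, hxr (k+1) hk⟩).abs).const_mul (L*δ))
    have hsum2 := intervalIntegral.sum_integral_adjacent_intervals hIIpiece
    rw [hx0, hxn] at hsum2
    have hsum1 : ∑ k ∈ Finset.range n,
        (γ (x_ (k+1)) * Fa M' (x_ (k+1)) - γ (x_ k) * Fa M' (x_ k))
        = γ r₁ * Fa M' r₁ - γ a * Fa M' a := by
      rw [Finset.sum_range_sub (fun k => γ (x_ k) * Fa M' (x_ k)), hx0, hxn]
    have hsumle : (∫ t in a..r₁, ((-K) * t ^ (-(3:ℝ)/4) - (L*δ) * |g t|))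
        ≤ γ r₁ * Fa M' r₁ - γ a * Fa M' a := by
      rw [← hsum2, ← hsum1]
      exact Finset.sum_le_sum (fun k hk => piece k (Finset.mem_range.mp hk))
    -- evaluate the integral
    have heval : (∫ t in a..r₁, ((-K) * t ^ (-(3:ℝ)/4) - (L*δ) * |g t|))
        = (-K) * I₁ - (L*δ) * Ig := by
      rw [intervalIntegral.integral_sub ((hconta a r₁ le_rfl har).const_mul (-K))
        ((hgar.abs).const_mul (L*δ)),
        intervalIntegral.integral_const_mul, intervalIntegral.integral_const_mul]
    rw [heval] at hsumle
    -- the error term is small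
    have herr : (L*δ) * Ig ≤ ε := by
      have hWn : W < ε * n := by
        have := (div_lt_iff₀ hε).mp hn
        linarith
      have : (L*δ) * Ig = W / n := by
        rw [hWdef, hδdef]
        field_simp
      rw [this, div_le_iff₀ hn0]
      linarith
    linarith
  -- evaluate I₁ and conclude
  have hI₁ : I₁ ≤ 4 * r₁ ^ ((1:ℝ)/4) := by
    have h4 : I₁ = (r₁ ^ (-(3:ℝ)/4 + 1) - a ^ (-(3:ℝ)/4 + 1)) / (-(3:ℝ)/4 + 1) := by
      rw [hI₁def]
      exact integral_rpow (Or.inl (by norm_num))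
    rw [h4, show (-(3:ℝ)/4 + 1) = (1:ℝ)/4 by norm_num]
    have hanng : 0 ≤ a ^ ((1:ℝ)/4) := (Real.rpow_pos_of_pos ha0 _).le
    rw [div_le_iff₀ (by norm_num : (0:ℝ) < 1/4)]
    nlinarith [Real.rpow_pos_of_pos hr₁ ((1:ℝ)/4)]
  have hfinal : γ a * Fa M' a ≤ γ r₁ * Fa M' r₁ + K * (4 * r₁ ^ ((1:ℝ)/4)) := by
    have : K * I₁ ≤ K * (4 * r₁ ^ ((1:ℝ)/4)) := mul_le_mul_of_nonneg_left hI₁ hKnn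
    linarith
  -- unwind : γ a ≤ C a²
  have hγa : 0 ≤ γ a := hnn a ⟨ha0.le, har⟩
  have hone : (1:ℝ) ≤ (Pa M' a)^((8:ℝ)/3) := by
    have := Real.rpow_le_rpow (by norm_num : (0:ℝ) ≤ 1) (Pa_one_le hM' ha0.le)
      (by norm_num : (0:ℝ) ≤ (8:ℝ)/3)
    rwa [Real.one_rpow] at this
  have hFaA : a ^ (-2:ℝ) ≤ Fa M' a := by
    have hp : 0 < a ^ (-2:ℝ) := Real.rpow_pos_of_pos ha0 _
    calc a ^ (-2:ℝ) = a ^ (-2:ℝ) * 1 := (mul_one _).symm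
    _ ≤ a ^ (-2:ℝ) * (Pa M' a)^((8:ℝ)/3) := by nlinarith
    _ = Fa M' a := rfl
  have hchain : γ a * a ^ (-2:ℝ) ≤ γ r₁ * Fa M' r₁ + K * (4 * r₁ ^ ((1:ℝ)/4)) := by
    calc γ a * a ^ (-2:ℝ) ≤ γ a * Fa M' a := mul_le_mul_of_nonneg_left hFaA hγa
    _ ≤ _ := hfinal
  have ha2 : a ^ (-2:ℝ) * a^2 = 1 := by
    rw [show (a:ℝ)^2 = a^(2:ℝ) by rw [← Real.rpow_natCast a 2]; norm_num,
      ← Real.rpow_add ha0]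
    norm_num
  have hsq : (0:ℝ) < a^2 := by positivity
  calc γ a = γ a * a ^ (-2:ℝ) * a^2 := by rw [mul_assoc, ha2, mul_one]
  _ ≤ (γ r₁ * Fa M' r₁ + K * (4 * r₁ ^ ((1:ℝ)/4))) * a^2 :=
      mul_le_mul_of_nonneg_right hchain hsq.le
end

section
/- Let γ : (0, r] → ℝ be absolutely continuous, nonnegative, and nondecreasing, and suppose there exist constants M ≥ 0, δ ∈ (0,1), and m ∈ (0,2) with min(3δ, m) > η for some η > 0, such that −M(s^{3δ} + s²) ≤ −γ(s) + (s/m) γ'(s) for almost every 0 < s ≤ r. Then there exists a constant C (depending on M, δ, η, m, r, γ(r)) such that γ(s) ≤ C s^η for all 0 < s ≤ r. -/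
open MeasureTheory

set_option maxHeartbeats 2000000 in
theorem stmt14 (r : ℝ) (hr : 0 < r) (γ g : ℝ → ℝ)
    (hint : IntervalIntegrable g volume 0 r)
    (hAC : ∀ x ∈ Set.Icc (0:ℝ) r, γ x = γ 0 + ∫ t in (0:ℝ)..x, g t)
    (hnn : ∀ x ∈ Set.Ioc (0:ℝ) r, 0 ≤ γ x)
    (hmono : MonotoneOn γ (Set.Ioc 0 r))
    (M δ m η : ℝ) (hM : 0 ≤ M) (hδ : δ ∈ Set.Ioo (0:ℝ) 1)
    (hm : m ∈ Set.Ioo (0:ℝ) 2) (hη : 0 < η) (hηmin : η < min (3*δ) m)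
    (hineq : ∀ᵐ s ∂(volume.restrict (Set.Ioc (0:ℝ) r)),
      -M * (s ^ (3*δ) + s^2) ≤ -γ s + (s/m) * g s) :
    ∃ C : ℝ, ∀ s ∈ Set.Ioc (0:ℝ) r, γ s ≤ C * s ^ η := by
  classical
  obtain ⟨hδ0, hδ1⟩ := hδ
  obtain ⟨hm0, hm2⟩ := hm
  have hη3δ : η < 3*δ := lt_of_lt_of_le hηmin (min_le_left _ _)
  have hηm : η < m := lt_of_lt_of_le hηmin (min_le_right _ _)
  set μ : ℝ := min (3*δ) 2 with hμdef
  have hημ : η < μ := lt_min hη3δ (hηm.trans hm2)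
  have hμ3δ : μ ≤ 3*δ := min_le_left _ _
  have hμ2 : μ ≤ 2 := min_le_right _ _
  have hμ0 : 0 < μ := hη.trans hημ
  set c : ℝ := (m - η)/(m*η) with hcdef
  have hc0 : 0 < c := div_pos (by linarith) (by positivity)
  set l : ℝ := Real.exp c with hldef
  have hl0 : 0 < l := Real.exp_pos c
  have hl1 : 1 < l := by
    rw [hldef, ← Real.exp_zero]
    exact Real.exp_lt_exp.2 hc0
  -- key numerical inequality : l ^ η ≤ 1 + m * c
  have hlη : l ^ η ≤ 1 + m * c := by
    have h1 : l ^ η = Real.exp (c * η) := by rw [hldef, ← Real.exp_mul]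
    have h2 : c * η = 1 - η/m := by
      rw [hcdef]; field_simp
    have h3 : 1 + m*c = m/η := by
      rw [hcdef]; field_simp; ring
    rw [h1, h2, h3]
    have h4 : η/m ≤ Real.exp (η/m - 1) := by
      have := Real.add_one_le_exp (η/m - 1); linarith
    have h5 : Real.exp (1 - η/m) * Real.exp (η/m - 1) = 1 := by
      rw [← Real.exp_add]; norm_num
    have hem : 0 < η/m := div_pos hη hm0
    have h6 : Real.exp (1 - η/m) ≤ 1/(η/m) := by
      rw [le_div_iff₀ hem]
      calc Real.exp (1-η/m) * (η/m) ≤ Real.exp (1-η/m) * Real.exp (η/m-1) :=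
            mul_le_mul_of_nonneg_left h4 (Real.exp_pos _).le
        _ = 1 := h5
    calc Real.exp (1-η/m) ≤ 1/(η/m) := h6
      _ = m/η := one_div_div _ _
  set D : ℝ := m*M*(r^(3*δ-μ)/(3*δ) + r^(2-μ)/2) with hDdef
  have hD0 : 0 ≤ D := by
    have h1 : (0:ℝ) ≤ r^(3*δ-μ)/(3*δ) + r^(2-μ)/2 := by positivity
    exact mul_nonneg (mul_nonneg hm0.le hM) h1
  have mem_uIcc : ∀ x : ℝ, 0 ≤ x → x ≤ r → x ∈ Set.uIcc (0:ℝ) r := by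
    intro x h1 h2; rw [Set.uIcc_of_le hr.le]; exact ⟨h1, h2⟩
  -- Key step: one multiplicative step of the iteration
  have step : ∀ a : ℝ, 0 < a → l * a ≤ r → l ^ η * γ a ≤ γ (l * a) + D * (l*a) ^ μ := by
    intro a ha hla
    have hb0 : 0 < l * a := mul_pos hl0 ha
    have hab : a ≤ l * a := by nlinarith
    have har : a ≤ r := hab.trans hla
    have hint0a : IntervalIntegrable g volume 0 a :=
      hint.mono_set (Set.uIcc_subset_uIcc Set.left_mem_uIcc (mem_uIcc a ha.le har))
    have hintab : IntervalIntegrable g volume a (l*a) :=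
      hint.mono_set (Set.uIcc_subset_uIcc (mem_uIcc a ha.le har) (mem_uIcc _ hb0.le hla))
    have hdiff : γ (l*a) - γ a = ∫ t in a..(l*a), g t := by
      rw [hAC a ⟨ha.le, har⟩, hAC (l*a) ⟨hb0.le, hla⟩,
        ← intervalIntegral.integral_add_adjacent_intervals hint0a hintab]
      ring
    set φ : ℝ → ℝ := fun t => m * γ a * (1/t) - m*M*t^(3*δ-1) - m*M*t with hφdef
    have hsub : Set.uIcc a (l*a) = Set.Icc a (l*a) := Set.uIcc_of_le hab
    have hne : ∀ t ∈ Set.Icc a (l*a), t ≠ 0 := fun t ht => (ha.trans_le ht.1).ne'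
    have hc1 : ContinuousOn (fun t : ℝ => m * γ a * (1/t)) (Set.Icc a (l*a)) :=
      continuousOn_const.mul (continuousOn_const.div continuousOn_id hne)
    have hc2 : ContinuousOn (fun t : ℝ => m*M*t^(3*δ-1)) (Set.Icc a (l*a)) :=
      continuousOn_const.mul (ContinuousOn.rpow_const continuousOn_id
        (fun t ht => Or.inl (hne t ht)))
    have hc3 : ContinuousOn (fun t : ℝ => m*M*t) (Set.Icc a (l*a)) :=
      continuousOn_const.mul continuousOn_id
    have hi1 : IntervalIntegrable (fun t : ℝ => m * γ a * (1/t)) volume a (l*a) :=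
      ContinuousOn.intervalIntegrable (by rw [hsub]; exact hc1)
    have hi2 : IntervalIntegrable (fun t : ℝ => m*M*t^(3*δ-1)) volume a (l*a) :=
      ContinuousOn.intervalIntegrable (by rw [hsub]; exact hc2)
    have hi3 : IntervalIntegrable (fun t : ℝ => m*M*t) volume a (l*a) :=
      ContinuousOn.intervalIntegrable (by rw [hsub]; exact hc3)
    have hφint : IntervalIntegrable φ volume a (l*a) := (hi1.sub hi2).sub hi3
    have haesub : Set.Icc a (l*a) ⊆ Set.Ioc 0 r :=
      fun t ht => ⟨ha.trans_le ht.1, ht.2.trans hla⟩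
    have hae : ∀ᵐ t ∂(volume.restrict (Set.Icc a (l*a))), φ t ≤ g t := by
      have h1 := ae_restrict_of_ae_restrict_of_subset haesub hineq
      filter_upwards [h1, ae_restrict_mem measurableSet_Icc] with t ht htm
      have ht0 : 0 < t := ha.trans_le htm.1
      have htr : t ≤ r := htm.2.trans hla
      have hγ : γ a ≤ γ t := hmono ⟨ha, har⟩ ⟨ht0, htr⟩ htm.1
      have hkey : γ a - M*(t^(3*δ) + t^2) ≤ (t/m) * g t := by linarith
      have h2 : (m/t) * (γ a - M*(t^(3*δ)+t^2)) ≤ (m/t) * ((t/m) * g t) :=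
        mul_le_mul_of_nonneg_left hkey (by positivity)
      have h3 : (m/t) * ((t/m)*g t) = g t := by field_simp
      have h4 : t ^ (3*δ) = t^(3*δ-1) * t := by
        have e : 3*δ = (3*δ-1) + 1 := by ring
        rw [e]
        rw [Real.rpow_add_one ht0.ne']
        ring_nf
      have h5 : φ t = (m/t) * (γ a - M*(t^(3*δ)+t^2)) := by
        simp only [hφdef]
        rw [h4]
        field_simp
        ring
      rw [h5]
      calc (m/t) * (γ a - M*(t^(3*δ)+t^2)) ≤ (m/t) * ((t/m) * g t) := h2
        _ = g t := h3
    have hcomp : ∫ t in a..(l*a), φ t ≤ ∫ t in a..(l*a), g t :=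
      intervalIntegral.integral_mono_ae_restrict hab hφint hintab hae
    have h0notin : (0:ℝ) ∉ Set.uIcc a (l*a) := by
      rw [hsub]; rintro ⟨h1, -⟩; linarith
    have e1 : ∫ t in a..(l*a), m * γ a * (1/t) = m * γ a * (Real.log (l*a) - Real.log a) := by
      rw [intervalIntegral.integral_const_mul, integral_one_div h0notin,
        Real.log_div hb0.ne' ha.ne']
    have e2 : ∫ t in a..(l*a), m*M*t^(3*δ-1)
        = m*M*(((l*a)^(3*δ) - a^(3*δ))/(3*δ)) := by
      rw [intervalIntegral.integral_const_mul, integral_rpow (Or.inl (by linarith))]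
      have e : 3*δ-1+1 = 3*δ := by ring
      rw [e]
    have e3 : ∫ t in a..(l*a), m*M*t = m*M*(((l*a)^2 - a^2)/2) := by
      rw [intervalIntegral.integral_const_mul, integral_id]
    have esplit : ∫ t in a..(l*a), φ t
        = m*γ a*(Real.log (l*a) - Real.log a)
          - m*M*(((l*a)^(3*δ) - a^(3*δ))/(3*δ)) - m*M*(((l*a)^2 - a^2)/2) := by
      simp only [hφdef]
      rw [intervalIntegral.integral_sub (hi1.sub hi2) hi3,
        intervalIntegral.integral_sub hi1 hi2, e1, e2, e3]
    have elog : Real.log (l*a) - Real.log a = c := by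
      rw [Real.log_mul hl0.ne' ha.ne', hldef, Real.log_exp]; ring
    have hlow : m*γ a*c - m*M*((l*a)^(3*δ))/(3*δ) - m*M*((l*a)^2)/2 ≤ γ (l*a) - γ a := by
      rw [hdiff]
      have q1 : 0 ≤ m*M*a^(3*δ)/(3*δ) := by positivity
      have q2 : 0 ≤ m*M*a^2/2 := by positivity
      have := hcomp
      rw [esplit, elog] at this
      have e5 : m * M * (((l*a)^(3*δ) - a^(3*δ)) / (3*δ))
          = m*M*((l*a)^(3*δ))/(3*δ) - m*M*a^(3*δ)/(3*δ) := by ring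
      have e6 : m * M * (((l*a)^2 - a^2)/2) = m*M*((l*a)^2)/2 - m*M*a^2/2 := by ring
      rw [e5, e6] at this
      linarith
    have hγa0 : 0 ≤ γ a := hnn a ⟨ha, har⟩
    have h7 : l^η * γ a ≤ (1 + m*c) * γ a := mul_le_mul_of_nonneg_right hlη hγa0
    have he1 : (l*a)^(3*δ) ≤ (l*a)^μ * r^(3*δ-μ) := by
      have hsplit : (l*a)^(3*δ) = (l*a)^μ * (l*a)^(3*δ-μ) := by
        rw [← Real.rpow_add hb0]
        congr 1; ring
      rw [hsplit]
      exact mul_le_mul_of_nonneg_left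
        (Real.rpow_le_rpow hb0.le hla (by linarith)) (Real.rpow_nonneg hb0.le _)
    have he2 : (l*a)^2 ≤ (l*a)^μ * r^(2-μ) := by
      have hcast : (l*a)^2 = (l*a)^((2:ℝ)) := by
        rw [← Real.rpow_natCast (l*a) 2]; norm_num
      have hsplit : (l*a)^((2:ℝ)) = (l*a)^μ * (l*a)^(2-μ) := by
        rw [← Real.rpow_add hb0]
        congr 1; ring
      rw [hcast, hsplit]
      exact mul_le_mul_of_nonneg_left
        (Real.rpow_le_rpow hb0.le hla (by linarith)) (Real.rpow_nonneg hb0.le _)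
    have herr : m*M*((l*a)^(3*δ))/(3*δ) + m*M*((l*a)^2)/2 ≤ D * (l*a)^μ := by
      have hmM : (0:ℝ) ≤ m*M := mul_nonneg hm0.le hM
      have t1 : m*M*((l*a)^(3*δ))/(3*δ) ≤ m*M*((l*a)^μ * r^(3*δ-μ))/(3*δ) :=
        (div_le_div_iff_of_pos_right (by linarith)).2 (mul_le_mul_of_nonneg_left he1 hmM)
      have t2 : m*M*((l*a)^2)/2 ≤ m*M*((l*a)^μ * r^(2-μ))/2 :=
        (div_le_div_iff_of_pos_right (by norm_num)).2 (mul_le_mul_of_nonneg_left he2 hmM)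
      have t3 : m*M*((l*a)^μ * r^(3*δ-μ))/(3*δ) + m*M*((l*a)^μ * r^(2-μ))/2
          = D * (l*a)^μ := by
        rw [hDdef]; ring
      linarith
    linarith
  set q : ℝ := l^(μ-η) with hqdef
  have hq1 : 1 < q := by
    rw [hqdef]
    exact (Real.one_lt_rpow_iff_of_pos hl0).2 (Or.inl ⟨hl1, by linarith⟩)
  have hq0 : 0 < q := lt_trans one_pos hq1
  have hpowq : ∀ n : ℕ, ((l^n : ℝ))^(μ-η) = q^n := by
    intro n
    rw [← Real.rpow_natCast l n, ← Real.rpow_mul hl0.le, mul_comm ((n:ℝ)) (μ-η),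
      Real.rpow_mul hl0.le, Real.rpow_natCast]
  -- iteration
  have iter : ∀ n : ℕ, ∀ a : ℝ, 0 < a → l^n * a ≤ r →
      γ a * a^(-η) ≤ γ (l^n * a) * (l^n * a)^(-η)
        + D * a^(μ-η) * ∑ k ∈ Finset.range n, q^(k+1) := by
    intro n
    induction n with
    | zero =>
      intro a ha h
      simp
    | succ n ih =>
      intro a ha h
      have hlpow : (1:ℝ) ≤ l^n := one_le_pow₀ hl1.le
      have hb0 : 0 < l * a := mul_pos hl0 ha
      have hla_r : l * a ≤ r := by
        have h1 : l ≤ l^(n+1) := le_self_pow₀ hl1.le (Nat.succ_ne_zero n)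
        nlinarith
      have hstep := step a ha hla_r
      have e1 : (l*a)^(-η) = l^(-η) * a^(-η) := Real.mul_rpow hl0.le ha.le
      have e2 : l^η * l^(-η) = 1 := by
        rw [← Real.rpow_add hl0]; simp
      have e3 : (l*a)^μ * (l*a)^(-η) = (l*a)^(μ-η) := by
        rw [← Real.rpow_add hb0, ← sub_eq_add_neg]
      have e4 : (l*a)^(μ-η) = q * a^(μ-η) := by
        rw [Real.mul_rpow hl0.le ha.le, hqdef]
      have h3 : γ a * a^(-η) ≤ γ (l*a) * (l*a)^(-η) + D * (q * a^(μ-η)) := by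
        have h2 := mul_le_mul_of_nonneg_right hstep (Real.rpow_nonneg hb0.le (-η))
        calc γ a * a^(-η) = (l^η * l^(-η)) * (γ a * a^(-η)) := by rw [e2, one_mul]
          _ = (l^η * γ a) * ((l*a)^(-η)) := by rw [e1]; ring
          _ ≤ (γ (l*a) + D * (l*a)^μ) * (l*a)^(-η) := h2
          _ = γ (l*a) * (l*a)^(-η) + D * ((l*a)^μ * (l*a)^(-η)) := by ring
          _ = γ (l*a) * (l*a)^(-η) + D * (q * a^(μ-η)) := by rw [e3, e4]
      have ih' := ih (l*a) hb0 (by rw [show l^n * (l*a) = l^(n+1)*a from by ring]; exact h)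
      rw [show l^n * (l*a) = l^(n+1)*a from by ring] at ih'
      rw [e4] at ih'
      have hsum : ∑ k ∈ Finset.range (n+1), q^(k+1)
          = q * ∑ k ∈ Finset.range n, q^(k+1) + q := by
        rw [Finset.sum_range_succ' (fun k => q^(k+1)) n, Finset.mul_sum]
        simp only [pow_succ]
        ring_nf
      rw [hsum]
      have hre : D * a^(μ-η) * (q * (∑ k ∈ Finset.range n, q^(k+1)) + q)
          = D*(q*a^(μ-η)) + D*(q*a^(μ-η))*(∑ k ∈ Finset.range n, q^(k+1)) := by
        ring
      rw [hre]
      linarith [h3, ih']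
  -- geometric sum bound
  have hsum_bound : ∀ n : ℕ, ∑ k ∈ Finset.range n, q^(k+1) ≤ q^(n+1)/(q-1) := by
    intro n
    have h1 : ∑ k ∈ Finset.range n, q^(k+1) = q * ∑ k ∈ Finset.range n, q^k := by
      rw [Finset.mul_sum]
      exact Finset.sum_congr rfl fun k _ => by ring
    rw [h1, geom_sum_eq (by linarith : q ≠ 1)]
    have hq1' : 0 < q - 1 := by linarith
    have h2 : q * ((q^n - 1)/(q-1)) = (q^(n+1) - q)/(q-1) := by
      field_simp; ring
    rw [h2]
    refine (div_le_div_iff_of_pos_right hq1').2 ?_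
    linarith
  -- final assembly
  refine ⟨γ r * (r/l)^(-η) + D*q/(q-1)*r^(μ-η), ?_⟩
  intro s hs
  obtain ⟨hs0, hsr⟩ := hs
  have hex : ∃ n : ℕ, r < l^n * s := by
    obtain ⟨n, hn⟩ := pow_unbounded_of_one_lt (r/s) hl1
    refine ⟨n, ?_⟩
    rw [div_lt_iff₀ hs0] at hn
    linarith [hn]
  have hn0 : Nat.find hex ≠ 0 := by
    intro h0
    have hspec := Nat.find_spec hex
    rw [h0] at hspec
    simp at hspec
    linarith
  obtain ⟨k, hk⟩ := Nat.exists_eq_succ_of_ne_zero hn0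
  have hk_le : l^k * s ≤ r := not_lt.1 (Nat.find_min hex (by omega))
  have hk_gt : r < l^(k+1) * s := by
    have := Nat.find_spec hex
    rwa [hk] at this
  have hiter := iter k s hs0 hk_le
  have hlks0 : 0 < l^k * s := mul_pos (pow_pos hl0 k) hs0
  have h1 : γ (l^k * s) ≤ γ r := hmono ⟨hlks0, hk_le⟩ ⟨hr, le_refl r⟩ hk_le
  have h2 : r/l < l^k * s := by
    rw [div_lt_iff₀ hl0]
    have h2' := hk_gt
    rw [pow_succ] at h2'
    nlinarith
  have h3 : (l^k*s)^(-η) ≤ (r/l)^(-η) :=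
    Real.rpow_le_rpow_of_nonpos (div_pos hr hl0) h2.le (by linarith)
  have h4 : γ (l^k*s) * (l^k*s)^(-η) ≤ γ r * (r/l)^(-η) :=
    mul_le_mul h1 h3 (Real.rpow_nonneg hlks0.le _) (hnn r ⟨hr, le_refl r⟩)
  have h5 : D * s^(μ-η) * (∑ k' ∈ Finset.range k, q^(k'+1)) ≤ D*q/(q-1)*r^(μ-η) := by
    have hsnn : (0:ℝ) ≤ s^(μ-η) := Real.rpow_nonneg hs0.le _
    have hb1 : D * s^(μ-η) * (∑ k' ∈ Finset.range k, q^(k'+1))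
        ≤ D * s^(μ-η) * (q^(k+1)/(q-1)) :=
      mul_le_mul_of_nonneg_left (hsum_bound k) (mul_nonneg hD0 hsnn)
    have hpow : s^(μ-η) * q^k = (l^k*s)^(μ-η) := by
      rw [Real.mul_rpow (pow_pos hl0 k).le hs0.le, hpowq k]
      ring
    have hr1 : (l^k*s)^(μ-η) ≤ r^(μ-η) :=
      Real.rpow_le_rpow hlks0.le hk_le (by linarith)
    have hb2 : D * s^(μ-η) * (q^(k+1)/(q-1)) = D*q/(q-1) * (s^(μ-η) * q^k) := by
      rw [pow_succ]
      field_simp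
    rw [hb2, hpow] at hb1
    calc D * s^(μ-η) * (∑ k' ∈ Finset.range k, q^(k'+1))
        ≤ D*q/(q-1) * ((l^k*s)^(μ-η)) := hb1
      _ ≤ D*q/(q-1)*r^(μ-η) := by
          apply mul_le_mul_of_nonneg_left hr1
          have : 0 < q - 1 := by linarith
          positivity
  have h6 : γ s * s^(-η) ≤ γ r * (r/l)^(-η) + D*q/(q-1)*r^(μ-η) := by linarith
  have h7 : s^(-η) * s^η = 1 := by
    rw [← Real.rpow_add hs0]; simp
  calc γ s = (γ s * s^(-η)) * s^η := by rw [mul_assoc, h7, mul_one]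
    _ ≤ (γ r * (r/l)^(-η) + D*q/(q-1)*r^(μ-η)) * s^η :=
        mul_le_mul_of_nonneg_right h6 (Real.rpow_nonneg hs0.le _)
end
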